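/- arXiv:1308.6175 — 6 statements merged into one kernel-verified Lean document; each statement's English description precedes it below -/
import Mathlib

section
/- Let C_0 ⊆ C_1 ⊆ ... ⊆ C_{a-1} ⊆ C_a = (ZMod 2)^n be a family of nested binary linear codes, and let b_1, ..., b_n be a basis of (ZMod 2)^n such that b_1, ..., b_{k_i} span C_i (where k_i = dim C_i). Then the Construction D set Λ_D is an additive subgroup of ℤ^n; that is, Construction D always produces a lattice. -/
noncomputable section

/-- The natural embedding of `(ZMod 2)^n` into `ℤ^n`, applying coordinatewise the map
sending `0` to `0` and `1` to `1`. -/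
def psi {n : ℕ} (x : Fin n → ZMod 2) : Fin n → ℤ := fun k => ((x k).val : ℤ)

/-- The basis `b` of `(ZMod 2)^n` is such that its first `k_i = dim C_i` vectors
`b_1, ..., b_{k_i}` span `C_i`, for each `i < a`. -/
def SpansChain {n : ℕ} (a : ℕ) (C : ℕ → Submodule (ZMod 2) (Fin n → ZMod 2))
    (b : Module.Basis (Fin n) (ZMod 2) (Fin n → ZMod 2)) : Prop :=
  ∀ i < a, Submodule.span (ZMod 2)
      ((fun j => b j) '' {j : Fin n | (j : ℕ) < Module.finrank (ZMod 2) (C i)}) = C i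

/-- The Construction D set `Λ_D` associated to a chain of codes `C` and a basis `b`:
all vectors `Σ_{i<a} 2^i Σ_{j ≤ k_i} α_j^{(i)} ψ(b_j) + 2^a l` with `α_j^{(i)} ∈ {0,1}`,
`l ∈ ℤ^n`, and `k_i = dim C_i`. -/
def LambdaD {n : ℕ} (a : ℕ) (C : ℕ → Submodule (ZMod 2) (Fin n → ZMod 2))
    (b : Module.Basis (Fin n) (ZMod 2) (Fin n → ZMod 2)) : Set (Fin n → ℤ) :=
  { x | ∃ (α : ℕ → Fin n → ℤ) (l : Fin n → ℤ),
      (∀ i j, α i j = 0 ∨ α i j = 1) ∧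
      x = (∑ i ∈ Finset.range a, (2 ^ i : ℤ) •
            ∑ j ∈ Finset.univ.filter
                (fun j : Fin n => (j : ℕ) < Module.finrank (ZMod 2) (C i)),
              α i j • psi (b j)) + (2 ^ a : ℤ) • l }

/-- The carry lemma: arbitrary integer coefficients on levels `i ≤ p < a` can be reduced
to `{0,1}` coefficients by carrying overflow to higher levels. -/
lemma carry_lemma {n : ℕ} (a : ℕ) (k : ℕ → ℕ) (hk : ∀ i, i + 1 < a → k i ≤ k (i + 1))
    (v : Fin n → Fin n → ℤ) :
    ∀ (t i : ℕ), i + t = a → ∀ (m : ℕ → Fin n → ℤ) (l : Fin n → ℤ),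
      ∃ (α : ℕ → Fin n → ℤ) (l' : Fin n → ℤ), (∀ p q, α p q = 0 ∨ α p q = 1) ∧
        (∑ p ∈ Finset.Ico i a, (2 ^ p : ℤ) •
            ∑ j ∈ Finset.univ.filter (fun j : Fin n => (j : ℕ) < k p), m p j • v j)
          + (2 ^ a : ℤ) • l
        = (∑ p ∈ Finset.Ico i a, (2 ^ p : ℤ) •
            ∑ j ∈ Finset.univ.filter (fun j : Fin n => (j : ℕ) < k p), α p j • v j)
          + (2 ^ a : ℤ) • l' := by
  intro t
  induction t with
  | zero =>
    intro i hi m l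
    exact ⟨0, l, fun p q => Or.inl rfl, by subst hi; simp⟩
  | succ t ih =>
    intro i hi m l
    have hia : i < a := by omega
    set S : (Fin n → ℤ) → ℕ → (Fin n → ℤ) := fun c p =>
      ∑ j ∈ Finset.univ.filter (fun j : Fin n => (j : ℕ) < k p), c j • v j with hS
    set ε : Fin n → ℤ := fun j => m i j % 2 with hε
    set m' : Fin n → ℤ := fun j => m i j / 2 with hm'
    have hεmem : ∀ j, ε j = 0 ∨ ε j = 1 := fun j => Int.emod_two_eq_zero_or_one (m i j)
    have hsplit : ∀ j, m i j = ε j + 2 * m' j := fun j => by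
      show m i j = m i j % 2 + 2 * (m i j / 2); omega
    -- split off the bottom level i
    have hbot : ∀ (c : ℕ → Fin n → ℤ),
        (∑ p ∈ Finset.Ico i a, (2 ^ p : ℤ) • S (c p) p)
          = (2 ^ i : ℤ) • S (c i) i + ∑ p ∈ Finset.Ico (i + 1) a, (2 ^ p : ℤ) • S (c p) p :=
      fun c => Finset.sum_eq_sum_Ico_succ_bot hia _
    have hlevel : (2 ^ i : ℤ) • S (m i) i
        = (2 ^ i : ℤ) • S ε i + (2 ^ (i + 1) : ℤ) • S m' i := by
      have h : S (m i) i = S ε i + (2 : ℤ) • S m' i := by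
        show (∑ j ∈ Finset.univ.filter (fun j : Fin n => (j : ℕ) < k i), m i j • v j) = _
        show _ = (∑ j ∈ Finset.univ.filter (fun j : Fin n => (j : ℕ) < k i), ε j • v j)
          + (2 : ℤ) • ∑ j ∈ Finset.univ.filter (fun j : Fin n => (j : ℕ) < k i), m' j • v j
        rw [Finset.smul_sum, ← Finset.sum_add_distrib]
        refine Finset.sum_congr rfl fun j _ => ?_
        rw [smul_smul, ← add_smul, ← hsplit j]
      rw [h, smul_add, smul_smul, ← pow_succ]
    by_cases hia1 : i + 1 < a
    · -- carry goes into level i+1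
      set m2 : ℕ → Fin n → ℤ := fun p j =>
        if p = i + 1 then m p j + (if (j : ℕ) < k i then m' j else 0) else m p j with hm2
      obtain ⟨α, l', hα, heq0⟩ := ih (i + 1) (by omega) m2 l
      have heq : (∑ p ∈ Finset.Ico (i + 1) a, (2 ^ p : ℤ) • S (m2 p) p) + (2 ^ a : ℤ) • l
          = (∑ p ∈ Finset.Ico (i + 1) a, (2 ^ p : ℤ) • S (α p) p) + (2 ^ a : ℤ) • l' := heq0
      have hsub : Finset.univ.filter (fun j : Fin n => (j : ℕ) < k i)
          ⊆ Finset.univ.filter (fun j : Fin n => (j : ℕ) < k (i + 1)) := by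
        intro j hj
        simp only [Finset.mem_filter, Finset.mem_univ, true_and] at hj ⊢
        exact lt_of_lt_of_le hj (hk i hia1)
      have haux : (∑ j ∈ Finset.univ.filter (fun j : Fin n => (j : ℕ) < k (i + 1)),
            (if (j : ℕ) < k i then m' j else 0) • v j)
          = ∑ j ∈ Finset.univ.filter (fun j : Fin n => (j : ℕ) < k i), m' j • v j := by
        rw [← Finset.sum_subset hsub (fun j _ hj => by
          simp only [Finset.mem_filter, Finset.mem_univ, true_and] at hj
          rw [if_neg hj, zero_smul])]
        refine Finset.sum_congr rfl fun j hj => ?_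
        simp only [Finset.mem_filter, Finset.mem_univ, true_and] at hj
        rw [if_pos hj]
      have hmerge : S (m2 (i + 1)) (i + 1) = S (m (i + 1)) (i + 1) + S m' i := by
        show (∑ j ∈ Finset.univ.filter (fun j : Fin n => (j : ℕ) < k (i + 1)),
            m2 (i + 1) j • v j) = (∑ j ∈ Finset.univ.filter
              (fun j : Fin n => (j : ℕ) < k (i + 1)), m (i + 1) j • v j)
          + ∑ j ∈ Finset.univ.filter (fun j : Fin n => (j : ℕ) < k i), m' j • v j
        rw [← haux, ← Finset.sum_add_distrib]
        refine Finset.sum_congr rfl fun j _ => ?_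
        show (if i + 1 = i + 1 then m (i + 1) j + (if (j : ℕ) < k i then m' j else 0)
            else m (i + 1) j) • v j = _
        rw [if_pos rfl, add_smul]
      have htail : ∀ (c : ℕ → Fin n → ℤ), (∀ p, i + 1 < p → c p = m2 p) →
          (∑ p ∈ Finset.Ico (i + 1) a, (2 ^ p : ℤ) • S (c p) p)
            = (2 ^ (i + 1) : ℤ) • S (c (i + 1)) (i + 1)
              + ∑ p ∈ Finset.Ico (i + 2) a, (2 ^ p : ℤ) • S (m2 p) p := by
        intro c hc
        rw [Finset.sum_eq_sum_Ico_succ_bot hia1]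
        congr 1
        exact Finset.sum_congr rfl fun p hp => by
          rw [hc p (by simp only [Finset.mem_Ico] at hp; omega)]
      have h1 : (2 ^ (i + 1) : ℤ) • S m' i
            + (∑ p ∈ Finset.Ico (i + 1) a, (2 ^ p : ℤ) • S (m p) p)
          = ∑ p ∈ Finset.Ico (i + 1) a, (2 ^ p : ℤ) • S (m2 p) p := by
        rw [htail m (fun p hp => by
              rw [hm2]; funext j; exact (if_neg (by omega)).symm),
            htail m2 (fun p _ => rfl), hmerge, smul_add]
        abel
      refine ⟨fun p q => if p = i then ε q else α p q, l', ?_, ?_⟩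
      · intro p q
        by_cases h : p = i
        · simpa [h] using hεmem q
        · simpa [h] using hα p q
      · rw [hbot, hbot, hlevel]
        have h2 : (fun q => if i = i then ε q else α i q) = ε := by
          funext q; rw [if_pos rfl]
        have h3 : (∑ p ∈ Finset.Ico (i + 1) a,
              (2 ^ p : ℤ) • S (fun q => if p = i then ε q else α p q) p)
            = ∑ p ∈ Finset.Ico (i + 1) a, (2 ^ p : ℤ) • S (α p) p := by
          refine Finset.sum_congr rfl fun p hp => ?_
          simp only [Finset.mem_Ico] at hp
          have : (fun q => if p = i then ε q else α p q) = α p := by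
            funext q; rw [if_neg (by omega)]
          rw [this]
        rw [h2, h3]
        calc (2 ^ i : ℤ) • S ε i + (2 ^ (i + 1) : ℤ) • S m' i
              + (∑ p ∈ Finset.Ico (i + 1) a, (2 ^ p : ℤ) • S (m p) p) + (2 ^ a : ℤ) • l
            = (2 ^ i : ℤ) • S ε i + (((2 ^ (i + 1) : ℤ) • S m' i
              + ∑ p ∈ Finset.Ico (i + 1) a, (2 ^ p : ℤ) • S (m p) p) + (2 ^ a : ℤ) • l) := by
              abel
          _ = (2 ^ i : ℤ) • S ε i
              + ((∑ p ∈ Finset.Ico (i + 1) a, (2 ^ p : ℤ) • S (m2 p) p) + (2 ^ a : ℤ) • l) := by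
              rw [h1]
          _ = (2 ^ i : ℤ) • S ε i
              + ((∑ p ∈ Finset.Ico (i + 1) a, (2 ^ p : ℤ) • S (α p) p) + (2 ^ a : ℤ) • l') := by
              rw [heq]
          _ = (2 ^ i : ℤ) • S ε i
              + (∑ p ∈ Finset.Ico (i + 1) a, (2 ^ p : ℤ) • S (α p) p) + (2 ^ a : ℤ) • l' := by
              abel
    · -- i + 1 = a : carry goes into l
      have ha : i + 1 = a := by omega
      obtain ⟨α, l', hα, heq0⟩ := ih (i + 1) (by omega) m (l + S m' i)
      have heq : (∑ p ∈ Finset.Ico (i + 1) a, (2 ^ p : ℤ) • S (m p) p)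
            + (2 ^ a : ℤ) • (l + S m' i)
          = (∑ p ∈ Finset.Ico (i + 1) a, (2 ^ p : ℤ) • S (α p) p) + (2 ^ a : ℤ) • l' := heq0
      refine ⟨fun p q => if p = i then ε q else α p q, l', ?_, ?_⟩
      · intro p q
        by_cases h : p = i
        · simpa [h] using hεmem q
        · simpa [h] using hα p q
      · rw [hbot, hbot, hlevel]
        have h2 : (fun q => if i = i then ε q else α i q) = ε := by
          funext q; rw [if_pos rfl]
        have h3 : (∑ p ∈ Finset.Ico (i + 1) a,
              (2 ^ p : ℤ) • S (fun q => if p = i then ε q else α p q) p)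
            = ∑ p ∈ Finset.Ico (i + 1) a, (2 ^ p : ℤ) • S (α p) p := by
          refine Finset.sum_congr rfl fun p hp => ?_
          simp only [Finset.mem_Ico] at hp
          have : (fun q => if p = i then ε q else α p q) = α p := by
            funext q; rw [if_neg (by omega)]
          rw [this]
        rw [h2, h3]
        calc (2 ^ i : ℤ) • S ε i + (2 ^ (i + 1) : ℤ) • S m' i
              + (∑ p ∈ Finset.Ico (i + 1) a, (2 ^ p : ℤ) • S (m p) p) + (2 ^ a : ℤ) • l
            = (2 ^ i : ℤ) • S ε i
              + ((∑ p ∈ Finset.Ico (i + 1) a, (2 ^ p : ℤ) • S (m p) p)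
                + (2 ^ a : ℤ) • (l + S m' i)) := by
              rw [show ((2 : ℤ) ^ (i + 1)) = (2 : ℤ) ^ a from by rw [ha], smul_add]
              abel
          _ = (2 ^ i : ℤ) • S ε i
              + ((∑ p ∈ Finset.Ico (i + 1) a, (2 ^ p : ℤ) • S (α p) p) + (2 ^ a : ℤ) • l') := by
              rw [heq]
          _ = (2 ^ i : ℤ) • S ε i
              + (∑ p ∈ Finset.Ico (i + 1) a, (2 ^ p : ℤ) • S (α p) p) + (2 ^ a : ℤ) • l' := by
              abel

/-- Any expression of the Construction D form with arbitrary integer coefficients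
lies in `Λ_D`. -/
lemma free_mem_lambdaD {n a : ℕ} (C : ℕ → Submodule (ZMod 2) (Fin n → ZMod 2))
    (hmono : ∀ i < a, C i ≤ C (i + 1))
    (b : Module.Basis (Fin n) (ZMod 2) (Fin n → ZMod 2))
    (m : ℕ → Fin n → ℤ) (l : Fin n → ℤ) :
    (∑ i ∈ Finset.range a, (2 ^ i : ℤ) •
        ∑ j ∈ Finset.univ.filter
            (fun j : Fin n => (j : ℕ) < Module.finrank (ZMod 2) (C i)),
          m i j • psi (b j)) + (2 ^ a : ℤ) • l ∈ LambdaD a C b := by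
  have hk : ∀ i, i + 1 < a →
      Module.finrank (ZMod 2) (C i) ≤ Module.finrank (ZMod 2) (C (i + 1)) :=
    fun i hi => Submodule.finrank_mono (hmono i (by omega))
  obtain ⟨α, l', hα, heq⟩ := carry_lemma a (fun i => Module.finrank (ZMod 2) (C i))
    hk (fun j => psi (b j)) a 0 (by omega) m l
  refine ⟨α, l', hα, ?_⟩
  rw [Finset.range_eq_Ico, heq]

/-- For a family of nested binary linear codes
`C₀ ⊆ C₁ ⊆ ... ⊆ C_{a-1} ⊆ C_a = (ZMod 2)^n` and a basis `b` of `(ZMod 2)^n` whose first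
`k_i` vectors span `C_i`, the Construction D set `Λ_D` is an additive subgroup of `ℤ^n`:
Construction D always produces a lattice. -/
theorem lambdaD_is_lattice {n a : ℕ} (C : ℕ → Submodule (ZMod 2) (Fin n → ZMod 2))
    (hmono : ∀ i < a, C i ≤ C (i + 1)) (htop : C a = ⊤)
    (b : Module.Basis (Fin n) (ZMod 2) (Fin n → ZMod 2)) (hb : SpansChain a C b) :
    ∃ G : AddSubgroup (Fin n → ℤ), (G : Set (Fin n → ℤ)) = LambdaD a C b := by
  have key : ∀ (m : ℕ → Fin n → ℤ) (l : Fin n → ℤ), (∑ i ∈ Finset.range a, (2 ^ i : ℤ) •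
        ∑ j ∈ Finset.univ.filter
            (fun j : Fin n => (j : ℕ) < Module.finrank (ZMod 2) (C i)),
          m i j • psi (b j)) + (2 ^ a : ℤ) • l ∈ LambdaD a C b :=
    free_mem_lambdaD C hmono b
  refine ⟨{
    carrier := LambdaD a C b
    zero_mem' := by
      have := key 0 0
      simpa using this
    add_mem' := by
      rintro x y ⟨α, l, hα, rfl⟩ ⟨β, l', hβ, rfl⟩
      have := key (fun i j => α i j + β i j) (l + l')
      convert this using 1
      simp only [add_smul, Finset.sum_add_distrib, smul_add]
      abel
    neg_mem' := by
      rintro x ⟨α, l, hα, rfl⟩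
      have := key (fun i j => -α i j) (-l)
      convert this using 1
      simp only [neg_smul, Finset.sum_neg_distrib, smul_neg, neg_add]
  }, rfl⟩
end
end

section
/- Let C_0 ⊆ C_1 ⊆ ... ⊆ C_{a-1} ⊆ C_a = (ZMod 2)^n be a family of nested binary linear codes. Then the additive subgroup of ℤ^n generated by the union of all Construction D sets Λ_D — where the union ranges over all bases b_1, ..., b_n of (ZMod 2)^n such that b_1, ..., b_{k_i} span C_i for each i — equals Λ_CF, the smallest additive subgroup of ℤ^n containing Γ_CF. -/
noncomputable section

/-- The code formula set `Γ_CF = ψ(C₀) + 2ψ(C₁) + ... + 2^{a-1}ψ(C_{a-1}) + 2^a ℤ^n`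
associated to a chain of binary codes `C₀ ⊆ C₁ ⊆ ... ⊆ C_a = (ZMod 2)^n`. -/
def GammaCF {n : ℕ} (a : ℕ) (C : ℕ → Submodule (ZMod 2) (Fin n → ZMod 2)) :
    Set (Fin n → ℤ) :=
  { x | ∃ (c : ℕ → Fin n → ZMod 2) (l : Fin n → ℤ),
      (∀ i < a, c i ∈ C i) ∧
      x = (∑ i ∈ Finset.range a, (2 ^ i : ℤ) • psi (c i)) + (2 ^ a : ℤ) • l }

/-! ### Auxiliary lemmas -/

section Aux

open Submodule Set Module

lemma psi_zero {n : ℕ} : psi (0 : Fin n → ZMod 2) = 0 := by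
  funext k; simp [psi]

/-- Monotonicity of nested finsets. -/
lemma nest_mono {V : Type*} (a : ℕ) (t : ℕ → Finset V) (hnest : ∀ i < a, t i ⊆ t (i + 1)) :
    ∀ i k, i ≤ k → k ≤ a → t i ⊆ t k := by
  intro i k hik hka
  induction k, hik using Nat.le_induction with
  | base => exact subset_rfl
  | succ k hik ih => exact (ih (by omega)).trans (hnest k (by omega))

/-- Monotonicity of a chain of submodules. -/
lemma chain_mono {K V : Type*} [Field K] [AddCommGroup V] [Module K V]
    (a : ℕ) (C : ℕ → Submodule K V) (hmono : ∀ i < a, C i ≤ C (i + 1)) :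
    ∀ i k, i ≤ k → k ≤ a → C i ≤ C k := by
  intro i k hik hka
  induction k, hik using Nat.le_induction with
  | base => exact le_rfl
  | succ k hik ih => exact (ih (by omega)).trans (hmono k (by omega))

/-- Enumerating a nested family of finsets so that initial segments enumerate each level. -/
lemma exists_enum {V : Type*} [DecidableEq V] (a : ℕ) (t : ℕ → Finset V)
    (hnest : ∀ i < a, t i ⊆ t (i + 1)) :
    ∃ e : Fin (t a).card → V, Function.Injective e ∧
      ∀ i ≤ a, e '' {j | (j : ℕ) < (t i).card} = ↑(t i) := by
  induction a generalizing t with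
  | zero =>
    refine ⟨fun j => ((t 0).equivFin.symm j : V),
      fun j1 j2 h => by simpa using (t 0).equivFin.symm.injective (Subtype.ext h),
      fun i hi => ?_⟩
    interval_cases i
    ext x
    simp only [Set.mem_image, Set.mem_setOf_eq, Finset.mem_coe]
    constructor
    · rintro ⟨j, hj, rfl⟩; exact ((t 0).equivFin.symm j).2
    · intro hx
      exact ⟨(t 0).equivFin ⟨x, hx⟩, ((t 0).equivFin ⟨x, hx⟩).2, by simp⟩
  | succ a ih =>
    obtain ⟨e', he'inj, he'⟩ := ih t (fun i hi => hnest i (by omega))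
    set d : Finset V := t (a + 1) \ t a with hd
    have hsub : t a ⊆ t (a + 1) := hnest a (by omega)
    have hcard : (t a).card + d.card = (t (a + 1)).card := by
      rw [hd, Finset.card_sdiff_of_subset hsub]
      have := Finset.card_le_card hsub
      omega
    have he'mem : ∀ j, e' j ∈ t a := by
      intro j
      have h1 : e' j ∈ e' '' {j | (j : ℕ) < (t a).card} := ⟨j, j.2, rfl⟩
      rw [he' a le_rfl] at h1
      exact h1
    have hdm : ∀ (k : ℕ) (hk : k < d.card),
        (d.equivFin.symm ⟨k, hk⟩ : V) ∈ t (a + 1) ∧ (d.equivFin.symm ⟨k, hk⟩ : V) ∉ t a :=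
      fun k hk => Finset.mem_sdiff.mp (d.equivFin.symm ⟨k, hk⟩).2
    let F : Fin (t (a + 1)).card → V := fun j =>
      if h : (j : ℕ) < (t a).card then e' ⟨j, h⟩
      else (d.equivFin.symm ⟨(j : ℕ) - (t a).card, by omega⟩ : V)
    have hFpos : ∀ (j : Fin (t (a+1)).card) (h : (j : ℕ) < (t a).card), F j = e' ⟨j, h⟩ :=
      fun j h => dif_pos h
    have hFneg : ∀ (j : Fin (t (a+1)).card) (h : ¬ (j : ℕ) < (t a).card),
        F j = (d.equivFin.symm ⟨(j : ℕ) - (t a).card, by omega⟩ : V) :=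
      fun j h => dif_neg h
    have hFd : ∀ j, F j ∈ t (a+1) := by
      intro j
      by_cases h : (j : ℕ) < (t a).card
      · rw [hFpos j h]; exact hsub (he'mem _)
      · rw [hFneg j h]
        exact (hdm ((j:ℕ) - (t a).card) (by omega)).1
    refine ⟨F, ?_, ?_⟩
    · intro j1 j2 h
      by_cases h1 : (j1 : ℕ) < (t a).card <;> by_cases h2 : (j2 : ℕ) < (t a).card
      · rw [hFpos j1 h1, hFpos j2 h2] at h
        have := congrArg Fin.val (he'inj h)
        exact Fin.ext (by simpa using this)
      · exfalso
        rw [hFpos j1 h1, hFneg j2 h2] at h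
        exact (hdm ((j2:ℕ) - (t a).card) (by omega)).2 (h ▸ he'mem ⟨j1, h1⟩)
      · exfalso
        rw [hFneg j1 h1, hFpos j2 h2] at h
        exact (hdm ((j1:ℕ) - (t a).card) (by omega)).2 (h ▸ he'mem ⟨j2, h2⟩)
      · rw [hFneg j1 h1, hFneg j2 h2] at h
        have := congrArg Fin.val (d.equivFin.symm.injective (Subtype.ext h))
        simp only at this
        exact Fin.ext (by omega)
    · intro i hi
      by_cases hia : i ≤ a
      · have hci : (t i).card ≤ (t a).card :=
          Finset.card_le_card (nest_mono a t (fun k hk => hnest k (by omega)) i a hia le_rfl)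
        ext x
        simp only [Set.mem_image, Set.mem_setOf_eq, Finset.mem_coe]
        constructor
        · rintro ⟨j, hj, rfl⟩
          rw [hFpos j (lt_of_lt_of_le hj hci)]
          have h1 : e' ⟨j, lt_of_lt_of_le hj hci⟩ ∈ e' '' {j | (j : ℕ) < (t i).card} :=
            ⟨_, hj, rfl⟩
          rw [he' i hia] at h1
          exact h1
        · intro hx
          have hx' : x ∈ e' '' {j | (j : ℕ) < (t i).card} := by rw [he' i hia]; exact hx
          obtain ⟨j, hj, rfl⟩ := hx'
          refine ⟨⟨j, by omega⟩, hj, hFpos _ (by simpa using j.2)⟩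
      · have : i = a + 1 := by omega
        subst this
        ext x
        simp only [Set.mem_image, Set.mem_setOf_eq, Finset.mem_coe]
        constructor
        · rintro ⟨j, hj, rfl⟩
          exact hFd j
        · intro hx
          by_cases h : x ∈ t a
          · have hx' : x ∈ e' '' {j | (j : ℕ) < (t a).card} := by
              rw [he' a le_rfl]; exact h
            obtain ⟨j, hj, rfl⟩ := hx'
            exact ⟨⟨j, by omega⟩, by simpa using (by omega : (j:ℕ) < (t (a+1)).card),
              hFpos _ (by simpa using j.2)⟩
          · have hxd : x ∈ d := by rw [hd, Finset.mem_sdiff]; exact ⟨hx, h⟩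
            set j0 : Fin d.card := d.equivFin ⟨x, hxd⟩ with hj0
            have hj0lt := j0.2
            refine ⟨⟨(t a).card + (j0 : ℕ), by omega⟩, Fin.is_lt _, ?_⟩
            rw [hFneg _ (by simp)]
            have hv : ((t a).card + (j0:ℕ)) - (t a).card = (j0 : ℕ) := by omega
            have : (⟨((t a).card + (j0:ℕ)) - (t a).card, by omega⟩ : Fin d.card) = j0 :=
              Fin.ext (by simpa using hv)
            rw [this, hj0]
            simp

variable {K : Type*} {V : Type*} [Field K] [AddCommGroup V] [Module K V]

lemma exists_nested (a : ℕ) (C : ℕ → Submodule K V)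
    (hmono : ∀ i < a, C i ≤ C (i + 1)) (s : Set V)
    (hs : LinearIndependent K ((↑) : s → V)) (hs0 : s ⊆ C 0) :
    ∃ t : ℕ → Set V, s ⊆ t 0 ∧
      (∀ i ≤ a, LinearIndependent K ((↑) : t i → V) ∧ t i ⊆ C i ∧
        Submodule.span K (t i) = C i) ∧
      (∀ i < a, t i ⊆ t (i + 1)) := by
  induction a generalizing C s with
  | zero =>
    obtain ⟨b, hbt, hsb, htb, hli⟩ := exists_linearIndepOn_id_extension hs hs0
    refine ⟨fun _ => b, hsb, fun i hi => ?_, fun i hi => absurd hi (by omega)⟩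
    interval_cases i
    refine ⟨hli, hbt, le_antisymm (span_le.mpr hbt) fun x hx => htb hx⟩
  | succ a ih =>
    obtain ⟨b, hbt, hsb, htb, hli⟩ := exists_linearIndepOn_id_extension hs hs0
    have hbspan : Submodule.span K b = C 0 :=
      le_antisymm (span_le.mpr hbt) fun x hx => htb hx
    obtain ⟨t', hst', hprop', hnest'⟩ := ih (fun i => C (i + 1))
      (fun i hi => hmono (i + 1) (by omega)) b hli
      (fun x hx => hmono 0 (by omega) (hbt hx))
    refine ⟨fun i => match i with | 0 => b | (j + 1) => t' j, hsb, fun i hi => ?_, fun i hi => ?_⟩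
    · match i with
      | 0 => exact ⟨hli, hbt, hbspan⟩
      | (j + 1) => exact hprop' j (by omega)
    · match i with
      | 0 => exact hst'
      | (j + 1) => exact hnest' j (by omega)

lemma exists_nested_with (a : ℕ) (C : ℕ → Submodule K V)
    (hmono : ∀ i < a, C i ≤ C (i + 1)) (c : V) (m : ℕ) (hm : m ≤ a)
    (hc : c ∈ C m) (hc0 : c ≠ 0) (hmin : ∀ m' < m, c ∉ C m') :
    ∃ t : ℕ → Set V, c ∈ t m ∧
      (∀ i ≤ a, LinearIndependent K ((↑) : t i → V) ∧ t i ⊆ C i ∧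
        Submodule.span K (t i) = C i) ∧
      (∀ i < a, t i ⊆ t (i + 1)) := by
  match m with
  | 0 =>
    obtain ⟨t, hst, hprop, hnest⟩ := exists_nested a C hmono {c}
      (linearIndependent_unique_iff.mpr hc0) (Set.singleton_subset_iff.mpr hc)
    exact ⟨t, hst rfl, hprop, hnest⟩
  | (p + 1) =>
    obtain ⟨t1, -, hprop1, hnest1⟩ := exists_nested p C
      (fun i hi => hmono i (by omega)) ∅ (linearIndependent_empty K V) (Set.empty_subset _)
    obtain ⟨hli1, hsub1, hspan1⟩ := hprop1 p le_rfl
    have hcn : c ∉ t1 p := fun h => hmin p (by omega) (hsub1 h)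
    have hcs : c ∉ Submodule.span K (t1 p) := by rw [hspan1]; exact hmin p (by omega)
    have hli' : LinearIndependent K ((↑) : (insert c (t1 p) : Set V) → V) :=
      (linearIndepOn_id_insert hcn).mpr ⟨hli1, hcs⟩
    have hsub' : insert c (t1 p) ⊆ C (p + 1) :=
      Set.insert_subset hc (fun x hx => hmono p (by omega) (hsub1 hx))
    obtain ⟨t2, hst2, hprop2, hnest2⟩ := exists_nested (a - (p + 1)) (fun i => C (p + 1 + i))
      (fun i hi => by
        show C (p + 1 + i) ≤ C (p + 1 + (i + 1))
        have he : p + 1 + (i + 1) = p + 1 + i + 1 := by omega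
        rw [he]
        exact hmono (p + 1 + i) (by omega)) (insert c (t1 p)) hli' hsub'
    set tt : ℕ → Set V := fun i => if i < p + 1 then t1 i else t2 (i - (p + 1)) with htt
    have httl : ∀ i, i < p + 1 → tt i = t1 i := fun i h => if_pos h
    have httr : ∀ i, ¬ i < p + 1 → tt i = t2 (i - (p + 1)) := fun i h => if_neg h
    refine ⟨tt, ?_, ?_, ?_⟩
    · rw [httr (p + 1) (by omega)]
      simpa using hst2 (Set.mem_insert _ _)
    · intro i hi
      by_cases h : i < p + 1
      · rw [httl i h]; exact hprop1 i (by omega)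
      · rw [httr i h]
        have := hprop2 (i - (p + 1)) (by omega)
        have he : p + 1 + (i - (p + 1)) = i := by omega
        rw [he] at this
        exact this
    · intro i hi
      by_cases h : i + 1 < p + 1
      · rw [httl i (by omega), httl (i + 1) h]; exact hnest1 i (by omega)
      · by_cases h2 : i < p + 1
        · have hip : i = p := by omega
          subst hip
          rw [httl i h2, httr (i + 1) (by omega)]
          intro x hx
          have hx' : x ∈ insert c (t1 i) := Set.mem_insert_of_mem _ hx
          simpa using hst2 hx'
        · rw [httr i h2, httr (i + 1) (by omega)]
          have := hnest2 (i - (p + 1)) (by omega)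
          have he : i - (p + 1) + 1 = i + 1 - (p + 1) := by omega
          rw [he] at this
          exact this

lemma basis_of_nested {n : ℕ} (a : ℕ) (C : ℕ → Submodule (ZMod 2) (Fin n → ZMod 2))
    (htop : C a = ⊤) (t : ℕ → Set (Fin n → ZMod 2))
    (hprop : ∀ i ≤ a, LinearIndependent (ZMod 2) ((↑) : t i → (Fin n → ZMod 2)) ∧
      t i ⊆ C i ∧ Submodule.span (ZMod 2) (t i) = C i)
    (hnest : ∀ i < a, t i ⊆ t (i + 1)) :
    ∃ b : Basis (Fin n) (ZMod 2) (Fin n → ZMod 2),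
      (∀ i < a, Submodule.span (ZMod 2)
          ((fun j => b j) '' {j : Fin n | (j : ℕ) < Module.finrank (ZMod 2) (C i)}) = C i) ∧
      ∀ i ≤ a, ∀ x ∈ t i, ∃ j : Fin n,
        (j : ℕ) < Module.finrank (ZMod 2) (C i) ∧ b j = x := by
  classical
  set T : ℕ → Finset (Fin n → ZMod 2) := fun i => (Set.toFinite (t i)).toFinset with hT
  have hTc : ∀ i, (T i : Set (Fin n → ZMod 2)) = t i := fun i => Set.Finite.coe_toFinset _
  have hcard : ∀ i ≤ a, (T i).card = finrank (ZMod 2) (C i) := by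
    intro i hi
    obtain ⟨h1, h2, h3⟩ := hprop i hi
    have h1' : LinearIndependent (ZMod 2)
        ((↑) : ((T i : Set (Fin n → ZMod 2))) → (Fin n → ZMod 2)) := (hTc i).symm ▸ h1
    rw [← h3, ← hTc i]
    exact (finrank_span_finset_eq_card h1').symm
  have hn : n = (T a).card := by
    rw [hcard a le_rfl, htop, finrank_top, Module.finrank_fin_fun]
  obtain ⟨e, heinj, he⟩ := exists_enum a T (by
    intro i hi x hx
    have : x ∈ t i := by rw [← hTc i]; exact hx
    have : x ∈ t (i + 1) := hnest i hi this
    rw [← hTc (i + 1)] at this; exact this)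
  have hemem : ∀ k, e k ∈ t a := by
    intro k
    have : e k ∈ e '' {j | (j : ℕ) < (T a).card} := ⟨k, k.2, rfl⟩
    rw [he a le_rfl, hTc a] at this
    exact this
  set b0 : Fin n → (Fin n → ZMod 2) := fun j => e (Fin.cast hn j) with hb0
  have hli : LinearIndependent (ZMod 2) b0 := by
    have hta := (hprop a le_rfl).1
    have := hta.comp (fun j : Fin n => (⟨e (Fin.cast hn j), hemem _⟩ : t a))
      (fun j1 j2 h => by
        have := heinj (congrArg Subtype.val h)
        exact Fin.ext (by simpa using congrArg Fin.val this))
    exact this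
  have hrange : Set.range b0 = t a := by
    ext x
    constructor
    · rintro ⟨j, rfl⟩; exact hemem _
    · intro hx
      have hx' : x ∈ (T a : Set (Fin n → ZMod 2)) := by rw [hTc a]; exact hx
      have : x ∈ e '' {j | (j : ℕ) < (T a).card} := by rw [he a le_rfl]; exact hx'
      obtain ⟨k, _, rfl⟩ := this
      exact ⟨Fin.cast hn.symm k, by rw [hb0]; congr 1⟩
  have hspan : ⊤ ≤ Submodule.span (ZMod 2) (Set.range b0) := by
    rw [hrange, (hprop a le_rfl).2.2, htop]
  set b : Basis (Fin n) (ZMod 2) (Fin n → ZMod 2) := Basis.mk hli hspan with hb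
  have hbc : ∀ j, b j = b0 j := fun j => by rw [hb, Basis.coe_mk]
  -- key image fact
  have himg : ∀ i ≤ a, b0 '' {j : Fin n | (j : ℕ) < (T i).card} = t i := by
    intro i hi
    ext x
    constructor
    · rintro ⟨j, hj, rfl⟩
      have : b0 j ∈ e '' {k | (k : ℕ) < (T i).card} := ⟨Fin.cast hn j, hj, rfl⟩
      rw [he i hi, hTc i] at this
      exact this
    · intro hx
      have hx' : x ∈ (T i : Set (Fin n → ZMod 2)) := by rw [hTc i]; exact hx
      have : x ∈ e '' {k | (k : ℕ) < (T i).card} := by rw [he i hi]; exact hx'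
      obtain ⟨k, hk, rfl⟩ := this
      refine ⟨Fin.cast hn.symm k, by simpa using hk, by rw [hb0]; congr 1⟩
  refine ⟨b, ?_, ?_⟩
  · intro i hi
    have : (fun j => b j) = b0 := funext hbc
    rw [this, ← hcard i (le_of_lt hi), himg i (le_of_lt hi)]
    exact (hprop i (le_of_lt hi)).2.2
  · intro i hi x hx
    have : x ∈ b0 '' {j : Fin n | (j : ℕ) < (T i).card} := by rw [himg i hi]; exact hx
    obtain ⟨j, hj, rfl⟩ := this
    exact ⟨j, by rw [← hcard i hi]; exact hj, hbc j⟩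

lemma exists_spanschain_basis {n : ℕ} (a : ℕ) (C : ℕ → Submodule (ZMod 2) (Fin n → ZMod 2))
    (hmono : ∀ i < a, C i ≤ C (i + 1)) (htop : C a = ⊤) :
    ∃ b : Basis (Fin n) (ZMod 2) (Fin n → ZMod 2), SpansChain a C b := by
  obtain ⟨t, -, hprop, hnest⟩ := exists_nested a C hmono ∅
    (linearIndependent_empty (ZMod 2) _) (Set.empty_subset _)
  obtain ⟨b, hb, -⟩ := basis_of_nested a C htop t hprop hnest
  exact ⟨b, hb⟩

lemma exists_basis_mem {n : ℕ} (a : ℕ) (C : ℕ → Submodule (ZMod 2) (Fin n → ZMod 2))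
    (hmono : ∀ i < a, C i ≤ C (i + 1)) (htop : C a = ⊤)
    {c : Fin n → ZMod 2} {m : ℕ} (hm : m ≤ a) (hc : c ∈ C m) (hc0 : c ≠ 0) :
    ∃ b : Basis (Fin n) (ZMod 2) (Fin n → ZMod 2), SpansChain a C b ∧
      ∃ j : Fin n, (j : ℕ) < Module.finrank (ZMod 2) (C m) ∧ b j = c := by
  classical
  have hex : ∃ i, c ∈ C i := ⟨m, hc⟩
  set m0 := Nat.find hex with hm0def
  have hm0 : m0 ≤ m := Nat.find_min' hex hc
  have hcm0 : c ∈ C m0 := Nat.find_spec hex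
  have hmin : ∀ m' < m0, c ∉ C m' := fun m' h => Nat.find_min hex h
  obtain ⟨t, htc, hprop, hnest⟩ := exists_nested_with a C hmono c m0
    (le_trans hm0 hm) hcm0 hc0 hmin
  obtain ⟨b, hb, hpos⟩ := basis_of_nested a C htop t hprop hnest
  obtain ⟨j, hj, hbj⟩ := hpos m0 (le_trans hm0 hm) c htc
  refine ⟨b, hb, j, lt_of_lt_of_le hj ?_, hbj⟩
  exact Submodule.finrank_mono (chain_mono a C hmono m0 m hm0 hm)

lemma mem_gamma_single {n : ℕ} (a : ℕ) (C : ℕ → Submodule (ZMod 2) (Fin n → ZMod 2))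
    {i : ℕ} (hi : i < a) {c : Fin n → ZMod 2} (hc : c ∈ C i) :
    (2 ^ i : ℤ) • psi c ∈ GammaCF a C := by
  classical
  refine ⟨fun k => if k = i then c else 0, 0, fun k hk => ?_, ?_⟩
  · dsimp only
    split_ifs with h
    · rw [h]; exact hc
    · exact (C k).zero_mem
  · rw [smul_zero, add_zero]
    rw [Finset.sum_eq_single_of_mem i (Finset.mem_range.mpr hi)]
    · dsimp only
      rw [if_pos rfl]
    · intro k hk hki
      dsimp only
      rw [if_neg hki, psi_zero, smul_zero]

lemma mem_gamma_top {n : ℕ} (a : ℕ) (C : ℕ → Submodule (ZMod 2) (Fin n → ZMod 2))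
    (l : Fin n → ℤ) : (2 ^ a : ℤ) • l ∈ GammaCF a C := by
  refine ⟨fun _ => 0, l, fun k hk => (C k).zero_mem, ?_⟩
  simp [psi_zero]

end Aux

/-- The additive subgroup of `ℤ^n` generated by the union of all
Construction D sets `Λ_D` — over all bases `b` of `(ZMod 2)^n` whose first `k_i` vectors
span `C_i` — equals `Λ_CF`, the smallest additive subgroup containing `Γ_CF`. -/
theorem closure_iUnion_lambdaD_eq_lambdaCF {n a : ℕ}
    (C : ℕ → Submodule (ZMod 2) (Fin n → ZMod 2))
    (hmono : ∀ i < a, C i ≤ C (i + 1)) (htop : C a = ⊤) :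
    AddSubgroup.closure
        (⋃ (b : Module.Basis (Fin n) (ZMod 2) (Fin n → ZMod 2)) (_ : SpansChain a C b),
          LambdaD a C b)
      = AddSubgroup.closure (GammaCF a C) := by
  classical
  apply le_antisymm
  · rw [AddSubgroup.closure_le]
    rintro x hx
    simp only [Set.mem_iUnion] at hx
    obtain ⟨b, hb, α, l, hα, rfl⟩ := hx
    refine AddSubgroup.add_mem _ ?_ ?_
    · refine sum_mem (fun i hi => ?_)
      rw [Finset.smul_sum]
      refine sum_mem (fun j hj => ?_)
      rcases hα i j with h0 | h1
      · rw [h0, zero_smul, smul_zero]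
        exact AddSubgroup.zero_mem _
      · rw [h1, one_smul]
        apply AddSubgroup.subset_closure
        have hbj : b j ∈ C i := by
          rw [← hb i (Finset.mem_range.mp hi)]
          exact Submodule.subset_span ⟨j, (Finset.mem_filter.mp hj).2, rfl⟩
        exact mem_gamma_single a C (Finset.mem_range.mp hi) hbj
    · exact AddSubgroup.subset_closure (mem_gamma_top a C l)
  · rw [AddSubgroup.closure_le]
    rintro x ⟨c, l, hc, rfl⟩
    refine AddSubgroup.add_mem _ ?_ ?_
    · refine sum_mem (fun i hi => ?_)
      by_cases h0 : c i = 0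
      · rw [h0, psi_zero, smul_zero]
        exact AddSubgroup.zero_mem _
      · obtain ⟨b, hb, j, hj, hbj⟩ := exists_basis_mem a C hmono htop
          (le_of_lt (Finset.mem_range.mp hi)) (hc i (Finset.mem_range.mp hi)) h0
        apply AddSubgroup.subset_closure
        refine Set.mem_iUnion.mpr ⟨b, Set.mem_iUnion.mpr ⟨hb, ?_⟩⟩
        refine ⟨fun i' j' => if i' = i ∧ j' = j then 1 else 0, 0, fun i' j' => ?_, ?_⟩
        · by_cases h : i' = i ∧ j' = j
          · exact Or.inr (if_pos h)
          · exact Or.inl (if_neg h)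
        · rw [smul_zero, add_zero]
          rw [Finset.sum_eq_single_of_mem i hi]
          · congr 1
            rw [Finset.sum_eq_single_of_mem j
              (Finset.mem_filter.mpr ⟨Finset.mem_univ j, hj⟩)]
            · dsimp only
              rw [if_pos ⟨rfl, rfl⟩, one_smul, hbj]
            · intro j' hj' hjj'
              dsimp only
              rw [if_neg (fun h => hjj' h.2), zero_smul]
          · intro i' hi' hii'
            have hz : ∀ j' ∈ Finset.univ.filter
                (fun j' : Fin n => (j' : ℕ) < Module.finrank (ZMod 2) (C i')),
                (fun i' j' => if i' = i ∧ j' = j then (1:ℤ) else 0) i' j' • psi (b j')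
                  = (0 : Fin n → ℤ) := by
              intro j' hj'
              dsimp only
              rw [if_neg (fun h => hii' h.1), zero_smul]
            rw [Finset.sum_congr rfl hz, Finset.sum_const_zero, smul_zero]
    · obtain ⟨b, hb⟩ := exists_spanschain_basis a C hmono htop
      apply AddSubgroup.subset_closure
      refine Set.mem_iUnion.mpr ⟨b, Set.mem_iUnion.mpr ⟨hb, ?_⟩⟩
      refine ⟨fun _ _ => 0, l, fun _ _ => Or.inl rfl, ?_⟩
      simp
end
end

section
/- Let C_0 ⊆ C_1 ⊆ ... ⊆ C_{a-1} ⊆ C_a = (ZMod 2)^n be a family of nested binary linear codes that is closed under Schur product. Then for every basis b_1, ..., b_n of (ZMod 2)^n such that b_1, ..., b_{k_i} span C_i for each i, the code formula set Γ_CF equals the Construction D set Λ_D. -/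
noncomputable section

namespace CFAux

variable {n : ℕ}

lemma psi_zero : psi (0 : Fin n → ZMod 2) = 0 := by
  funext k; simp [psi]

lemma psi_add_eq (c d : Fin n → ZMod 2) :
    psi c + psi d = psi (c + d) + (2:ℤ) • psi (c * d) := by
  have h : ∀ u v : ZMod 2, ((u.val : ℤ)) + v.val = (((u+v).val : ℤ)) + 2 * ((u*v).val) := by
    decide
  funext k
  simp only [psi, Pi.add_apply, Pi.smul_apply, Pi.mul_apply, smul_eq_mul]
  exact h (c k) (d k)

lemma psi_sub_eq (c d : Fin n → ZMod 2) :
    psi c - psi d = psi (c + d) - (2:ℤ) • psi (d + c * d) := by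
  have h : ∀ u v : ZMod 2, ((u.val : ℤ)) - v.val = (((u+v).val : ℤ)) - 2 * ((v + u*v).val) := by
    decide
  funext k
  simp only [psi, Pi.add_apply, Pi.sub_apply, Pi.smul_apply, Pi.mul_apply, smul_eq_mul]
  exact h (c k) (d k)

private lemma key (m : ℕ) (f : ℕ → Fin n → ℤ) (l : Fin n → ℤ) :
    (∑ i ∈ Finset.range (m+1), (2^i : ℤ) • f i) + (2^(m+1) : ℤ) • l
      = f 0 + (2:ℤ) • ((∑ i ∈ Finset.range m, (2^i:ℤ) • f (i+1)) + (2^m:ℤ) • l) := by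
  rw [Finset.sum_range_succ']
  simp only [smul_add, Finset.smul_sum, smul_smul, ← pow_succ', pow_zero, one_smul]
  abel

lemma mem_succ {m : ℕ} {D : ℕ → Submodule (ZMod 2) (Fin n → ZMod 2)} {x : Fin n → ℤ} :
    x ∈ GammaCF (m+1) D ↔
      ∃ c ∈ D 0, ∃ y ∈ GammaCF m (fun t => D (t+1)), x = psi c + (2:ℤ) • y := by
  constructor
  · rintro ⟨c, l, hc, rfl⟩
    refine ⟨c 0, hc 0 (Nat.succ_pos _),
      (∑ i ∈ Finset.range m, (2^i:ℤ) • psi (c (i+1))) + (2^m:ℤ) • l,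
      ⟨fun t => c (t+1), l, fun i hi => hc (i+1) (by omega), rfl⟩, ?_⟩
    exact key m (fun i => psi (c i)) l
  · rintro ⟨c, hc, y, ⟨cy, l, hcy, rfl⟩, rfl⟩
    refine ⟨fun t => Nat.casesOn t c cy, l, ?_, ?_⟩
    · intro i hi
      cases i with
      | zero => exact hc
      | succ i => exact hcy i (by omega)
    · exact (key m (fun i => psi (Nat.casesOn i c cy)) l).symm

lemma zero_mem {m : ℕ} {D : ℕ → Submodule (ZMod 2) (Fin n → ZMod 2)} :
    (0 : Fin n → ℤ) ∈ GammaCF m D := by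
  exact ⟨0, 0, fun i _ => Submodule.zero_mem _, by simp [psi_zero]⟩

lemma psi_mem {m : ℕ} {D : ℕ → Submodule (ZMod 2) (Fin n → ZMod 2)}
    {c : Fin n → ZMod 2} (h : m = 0 ∨ c ∈ D 0) : psi c ∈ GammaCF m D := by
  cases m with
  | zero => exact ⟨0, psi c, fun i hi => absurd hi (Nat.not_lt_zero _), by simp⟩
  | succ m =>
    exact mem_succ.mpr ⟨c, h.resolve_left (by omega), 0, zero_mem, by simp⟩

lemma gamma_sub {m : ℕ} :
    ∀ {D : ℕ → Submodule (ZMod 2) (Fin n → ZMod 2)},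
      (∀ t, t+1 < m → D t ≤ D (t+1)) →
      (∀ t, t+1 < m → ∀ c ∈ D t, ∀ d ∈ D t, c * d ∈ D (t+1)) →
      ∀ {x y : Fin n → ℤ}, x ∈ GammaCF m D → y ∈ GammaCF m D → x - y ∈ GammaCF m D := by
  induction m with
  | zero =>
    intro D _ _ x y _ _
    exact ⟨0, x - y, fun i hi => absurd hi (Nat.not_lt_zero _), by simp⟩
  | succ m ih =>
    intro D hmono hschur x y hx hy
    obtain ⟨c, hc, u, hu, rfl⟩ := mem_succ.mp hx
    obtain ⟨d, hd, v, hv, rfl⟩ := mem_succ.mp hy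
    have hmono' : ∀ t, t+1 < m → D (t+1) ≤ D (t+1+1) := fun t ht => hmono (t+1) (by omega)
    have hschur' : ∀ t, t+1 < m → ∀ c ∈ D (t+1), ∀ d ∈ D (t+1), c * d ∈ D (t+1+1) :=
      fun t ht => hschur (t+1) (by omega)
    have hpsimem : psi (d + c * d) ∈ GammaCF m (fun t => D (t+1)) := by
      apply psi_mem
      rcases Nat.eq_zero_or_pos m with h0 | hpos
      · exact Or.inl h0
      · exact Or.inr ((D 1).add_mem (hmono 0 (by omega) hd) (hschur 0 (by omega) c hc d hd))
    have hw : (u - v) - psi (d + c * d) ∈ GammaCF m (fun t => D (t+1)) :=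
      ih hmono' hschur' (ih hmono' hschur' hu hv) hpsimem
    refine mem_succ.mpr ⟨c + d, (D 0).add_mem hc hd, _, hw, ?_⟩
    have h2 : psi (c + d) = psi c - psi d + (2:ℤ) • psi (d + c * d) := by
      rw [psi_sub_eq c d]; abel
    rw [h2, smul_sub, smul_sub]; abel

lemma gamma_neg {m : ℕ} {D : ℕ → Submodule (ZMod 2) (Fin n → ZMod 2)}
    (hmono : ∀ t, t+1 < m → D t ≤ D (t+1))
    (hschur : ∀ t, t+1 < m → ∀ c ∈ D t, ∀ d ∈ D t, c * d ∈ D (t+1))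
    {x : Fin n → ℤ} (hx : x ∈ GammaCF m D) : -x ∈ GammaCF m D := by
  have := gamma_sub hmono hschur zero_mem hx
  simpa using this

lemma gamma_add {m : ℕ} {D : ℕ → Submodule (ZMod 2) (Fin n → ZMod 2)}
    (hmono : ∀ t, t+1 < m → D t ≤ D (t+1))
    (hschur : ∀ t, t+1 < m → ∀ c ∈ D t, ∀ d ∈ D t, c * d ∈ D (t+1))
    {x y : Fin n → ℤ} (hx : x ∈ GammaCF m D) (hy : y ∈ GammaCF m D) :
    x + y ∈ GammaCF m D := by
  have := gamma_sub hmono hschur hx (gamma_neg hmono hschur hy)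
  simpa [sub_neg_eq_add] using this

lemma sum_psi {m : ℕ} {D : ℕ → Submodule (ZMod 2) (Fin n → ZMod 2)}
    (hmono : ∀ t, t+1 < m+1 → D t ≤ D (t+1))
    (hschur : ∀ t, t+1 < m+1 → ∀ c ∈ D t, ∀ d ∈ D t, c * d ∈ D (t+1))
    {ι : Type*} [DecidableEq ι] (s : Finset ι) (v : ι → Fin n → ZMod 2)
    (hv : ∀ j ∈ s, v j ∈ D 0) :
    ∃ w ∈ GammaCF m (fun t => D (t+1)),
      (∑ j ∈ s, psi (v j)) = psi (∑ j ∈ s, v j) + (2:ℤ) • w := by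
  have hmono' : ∀ t, t+1 < m → D (t+1) ≤ D (t+1+1) := fun t ht => hmono (t+1) (by omega)
  have hschur' : ∀ t, t+1 < m → ∀ c ∈ D (t+1), ∀ d ∈ D (t+1), c * d ∈ D (t+1+1) :=
    fun t ht => hschur (t+1) (by omega)
  induction s using Finset.induction_on with
  | empty => exact ⟨0, zero_mem, by simp [psi_zero]⟩
  | @insert a s ha ih =>
    obtain ⟨w, hw, hsum⟩ := ih (fun j hj => hv j (Finset.mem_insert_of_mem hj))
    have hprod : psi (v a * ∑ j ∈ s, v j) ∈ GammaCF m (fun t => D (t+1)) := by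
      apply psi_mem
      rcases Nat.eq_zero_or_pos m with h0 | hpos
      · exact Or.inl h0
      · exact Or.inr (hschur 0 (by omega) (v a) (hv a (Finset.mem_insert_self _ _))
          (∑ j ∈ s, v j) (Submodule.sum_mem _ (fun j hj => hv j (Finset.mem_insert_of_mem hj))))
    refine ⟨psi (v a * ∑ j ∈ s, v j) + w, gamma_add hmono' hschur' hprod hw, ?_⟩
    rw [Finset.sum_insert ha, Finset.sum_insert ha, hsum, ← add_assoc,
      psi_add_eq (v a) (∑ j ∈ s, v j), smul_add]
    abel

end CFAux

namespace CFAux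

variable {n : ℕ}

lemma lambda_mem_succ {m : ℕ} {D : ℕ → Submodule (ZMod 2) (Fin n → ZMod 2)}
    {b : Module.Basis (Fin n) (ZMod 2) (Fin n → ZMod 2)} {x : Fin n → ℤ} :
    x ∈ LambdaD (m+1) D b ↔
      ∃ α : Fin n → ℤ, (∀ j, α j = 0 ∨ α j = 1) ∧
        ∃ y ∈ LambdaD m (fun t => D (t+1)) b,
          x = (∑ j ∈ Finset.univ.filter
                (fun j : Fin n => (j : ℕ) < Module.finrank (ZMod 2) (D 0)),
              α j • psi (b j)) + (2:ℤ) • y := by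
  constructor
  · rintro ⟨α, l, hα, rfl⟩
    refine ⟨α 0, hα 0,
      (∑ i ∈ Finset.range m, (2^i:ℤ) • ∑ j ∈ Finset.univ.filter
          (fun j : Fin n => (j : ℕ) < Module.finrank (ZMod 2) (D (i+1))),
            α (i+1) j • psi (b j)) + (2^m:ℤ) • l,
      ⟨fun t => α (t+1), l, fun i j => hα (i+1) j, rfl⟩, ?_⟩
    exact key m (fun i => ∑ j ∈ Finset.univ.filter
      (fun j : Fin n => (j : ℕ) < Module.finrank (ZMod 2) (D i)), α i j • psi (b j)) l
  · rintro ⟨α, hα, y, ⟨αy, l, hαy, rfl⟩, rfl⟩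
    refine ⟨fun t => Nat.casesOn t α αy, l, ?_, ?_⟩
    · intro i j
      cases i with
      | zero => exact hα j
      | succ i => exact hαy i j
    · exact (key m (fun i => ∑ j ∈ Finset.univ.filter
        (fun j : Fin n => (j : ℕ) < Module.finrank (ZMod 2) (D i)),
          (Nat.casesOn i α αy : Fin n → ℤ) j • psi (b j)) l).symm

lemma psi_smul_val (r : ZMod 2) (x : Fin n → ZMod 2) :
    psi (r • x) = ((r.val : ℤ)) • psi x := by
  have h : ∀ u w : ZMod 2, (((u * w).val : ℤ)) = (u.val : ℤ) * w.val := by decide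
  funext k
  simp only [psi, Pi.smul_apply, smul_eq_mul]
  exact h r (x k)

lemma psi_decomp {m : ℕ} {D : ℕ → Submodule (ZMod 2) (Fin n → ZMod 2)}
    (hmono : ∀ t, t+1 < m+1 → D t ≤ D (t+1))
    (hschur : ∀ t, t+1 < m+1 → ∀ c ∈ D t, ∀ d ∈ D t, c * d ∈ D (t+1))
    (b : Module.Basis (Fin n) (ZMod 2) (Fin n → ZMod 2))
    (hspan0 : Submodule.span (ZMod 2)
      ((fun j => b j) '' {j : Fin n | (j : ℕ) < Module.finrank (ZMod 2) (D 0)}) = D 0)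
    {c : Fin n → ZMod 2} (hc : c ∈ D 0) :
    ∃ α : Fin n → ℤ, (∀ j, α j = 0 ∨ α j = 1) ∧
      ∃ w ∈ GammaCF m (fun t => D (t+1)),
        psi c = (∑ j ∈ Finset.univ.filter
            (fun j : Fin n => (j : ℕ) < Module.finrank (ZMod 2) (D 0)),
          α j • psi (b j)) + (2:ℤ) • w := by
  classical
  set k := Module.finrank (ZMod 2) (D 0) with hk
  have hsupp : ∀ j : Fin n, ¬((j : ℕ) < k) → b.repr c j = 0 := by
    have hmem : c ∈ Submodule.span (ZMod 2) (⇑b '' {j : Fin n | (j : ℕ) < k}) := by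
      rw [show (⇑b '' {j : Fin n | (j : ℕ) < k}) =
        ((fun j => b j) '' {j : Fin n | (j : ℕ) < k}) from rfl, hspan0]
      exact hc
    have hsub := b.mem_span_image.mp hmem
    intro j hj
    by_contra h
    exact hj (hsub (Finsupp.mem_support_iff.mpr h))
  set v : Fin n → (Fin n → ZMod 2) := fun j => (b.repr c j) • b j with hv
  have hvmem : ∀ j ∈ Finset.univ.filter (fun j : Fin n => (j : ℕ) < k), v j ∈ D 0 := by
    intro j hj
    apply Submodule.smul_mem
    rw [← hspan0]
    exact Submodule.subset_span ⟨j, (Finset.mem_filter.mp hj).2, rfl⟩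
  have hsumv : (∑ j ∈ Finset.univ.filter (fun j : Fin n => (j : ℕ) < k), v j) = c := by
    have hsub : ∑ j ∈ Finset.univ.filter (fun j : Fin n => (j : ℕ) < k), v j
        = ∑ j ∈ Finset.univ, v j := by
      apply Finset.sum_subset (Finset.filter_subset _ _)
      intro j _ hj
      have : b.repr c j = 0 := hsupp j (by simpa using hj)
      simp [hv, this]
    rw [hsub]
    exact b.sum_repr c
  obtain ⟨w, hw, hsum⟩ := sum_psi hmono hschur
    (Finset.univ.filter (fun j : Fin n => (j : ℕ) < k)) v hvmem
  have hterm : ∀ j : Fin n, psi (v j) = ((b.repr c j).val : ℤ) • psi (b j) := fun j =>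
    psi_smul_val (b.repr c j) (b j)
  have hmono' : ∀ t, t+1 < m → D (t+1) ≤ D (t+1+1) := fun t ht => hmono (t+1) (by omega)
  have hschur' : ∀ t, t+1 < m → ∀ c ∈ D (t+1), ∀ d ∈ D (t+1), c * d ∈ D (t+1+1) :=
    fun t ht => hschur (t+1) (by omega)
  refine ⟨fun j => ((b.repr c j).val : ℤ), ?_, -w, gamma_neg hmono' hschur' hw, ?_⟩
  · intro j
    have : ∀ u : ZMod 2, (u.val : ℤ) = 0 ∨ (u.val : ℤ) = 1 := by decide
    exact this _
  · rw [hsumv] at hsum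
    have h3 : ∑ j ∈ Finset.univ.filter (fun j : Fin n => (j : ℕ) < k),
        ((b.repr c j).val : ℤ) • psi (b j) = psi c + (2:ℤ) • w := by
      rw [← hsum]
      exact Finset.sum_congr rfl (fun j _ => (hterm j).symm)
    rw [h3, smul_neg]
    abel

lemma gamma_subset_lambda {b : Module.Basis (Fin n) (ZMod 2) (Fin n → ZMod 2)} {m : ℕ} :
    ∀ {D : ℕ → Submodule (ZMod 2) (Fin n → ZMod 2)},
      (∀ t, t+1 < m → D t ≤ D (t+1)) →
      (∀ t, t+1 < m → ∀ c ∈ D t, ∀ d ∈ D t, c * d ∈ D (t+1)) →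
      (∀ t < m, Submodule.span (ZMod 2)
        ((fun j => b j) '' {j : Fin n | (j : ℕ) < Module.finrank (ZMod 2) (D t)}) = D t) →
      GammaCF m D ⊆ LambdaD m D b := by
  induction m with
  | zero =>
    rintro D _ _ _ x ⟨c, l, _, rfl⟩
    exact ⟨0, l, fun i j => Or.inl rfl, by simp⟩
  | succ m ih =>
    intro D hmono hschur hspan x hx
    obtain ⟨c, hc, u, hu, rfl⟩ := mem_succ.mp hx
    obtain ⟨α, hα, w, hw, hpsi⟩ := psi_decomp hmono hschur b (hspan 0 (Nat.succ_pos _)) hc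
    have hmono' : ∀ t, t+1 < m → D (t+1) ≤ D (t+1+1) := fun t ht => hmono (t+1) (by omega)
    have hschur' : ∀ t, t+1 < m → ∀ c ∈ D (t+1), ∀ d ∈ D (t+1), c * d ∈ D (t+1+1) :=
      fun t ht => hschur (t+1) (by omega)
    have hspan' : ∀ t < m, Submodule.span (ZMod 2)
        ((fun j => b j) '' {j : Fin n | (j : ℕ) < Module.finrank (ZMod 2) (D (t+1))})
          = D (t+1) := fun t ht => hspan (t+1) (by omega)
    have hwu : w + u ∈ LambdaD m (fun t => D (t+1)) b :=
      ih hmono' hschur' hspan' (gamma_add hmono' hschur' hw hu)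
    refine lambda_mem_succ.mpr ⟨α, hα, w + u, hwu, ?_⟩
    rw [hpsi, smul_add]
    abel

lemma lambda_subset_gamma {b : Module.Basis (Fin n) (ZMod 2) (Fin n → ZMod 2)} {m : ℕ} :
    ∀ {D : ℕ → Submodule (ZMod 2) (Fin n → ZMod 2)},
      (∀ t, t+1 < m → D t ≤ D (t+1)) →
      (∀ t, t+1 < m → ∀ c ∈ D t, ∀ d ∈ D t, c * d ∈ D (t+1)) →
      (∀ t < m, Submodule.span (ZMod 2)
        ((fun j => b j) '' {j : Fin n | (j : ℕ) < Module.finrank (ZMod 2) (D t)}) = D t) →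
      LambdaD m D b ⊆ GammaCF m D := by
  induction m with
  | zero =>
    rintro D _ _ _ x ⟨α, l, _, rfl⟩
    exact ⟨0, l, fun i hi => absurd hi (Nat.not_lt_zero _), by simp [psi_zero]⟩
  | succ m ih =>
    intro D hmono hschur hspan x hx
    obtain ⟨α, hα, y, hy, rfl⟩ := lambda_mem_succ.mp hx
    have hmono' : ∀ t, t+1 < m → D (t+1) ≤ D (t+1+1) := fun t ht => hmono (t+1) (by omega)
    have hschur' : ∀ t, t+1 < m → ∀ c ∈ D (t+1), ∀ d ∈ D (t+1), c * d ∈ D (t+1+1) :=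
      fun t ht => hschur (t+1) (by omega)
    have hspan' : ∀ t < m, Submodule.span (ZMod 2)
        ((fun j => b j) '' {j : Fin n | (j : ℕ) < Module.finrank (ZMod 2) (D (t+1))})
          = D (t+1) := fun t ht => hspan (t+1) (by omega)
    have hy' : y ∈ GammaCF m (fun t => D (t+1)) := ih hmono' hschur' hspan' hy
    classical
    set v : Fin n → (Fin n → ZMod 2) := fun j => if α j = 1 then b j else 0 with hvdef
    have hvmem : ∀ j ∈ Finset.univ.filter
        (fun j : Fin n => (j : ℕ) < Module.finrank (ZMod 2) (D 0)), v j ∈ D 0 := by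
      intro j hj
      by_cases h1 : α j = 1
      · simp only [hvdef, if_pos h1]
        rw [← hspan 0 (Nat.succ_pos _)]
        exact Submodule.subset_span ⟨j, (Finset.mem_filter.mp hj).2, rfl⟩
      · simp only [hvdef, if_neg h1]
        exact Submodule.zero_mem _
    obtain ⟨w, hw, hsum⟩ := sum_psi hmono hschur _ v hvmem
    have hterm : ∀ j : Fin n, α j • psi (b j) = psi (v j) := by
      intro j
      rcases hα j with h0 | h1
      · have : α j ≠ 1 := by rw [h0]; norm_num
        simp [hvdef, h0, this, psi_zero]
      · simp [hvdef, h1, psi_zero]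
    have hcsum : (∑ j ∈ Finset.univ.filter
        (fun j : Fin n => (j : ℕ) < Module.finrank (ZMod 2) (D 0)), v j) ∈ D 0 :=
      Submodule.sum_mem _ hvmem
    refine mem_succ.mpr ⟨_, hcsum, w + y, gamma_add hmono' hschur' hw hy', ?_⟩
    rw [Finset.sum_congr rfl (fun j _ => hterm j), hsum, smul_add]
    abel

end CFAux

/-- If the chain of nested binary linear codes is closed under Schur
product, then for every basis `b` of `(ZMod 2)^n` whose first `k_i` vectors span `C_i`,
the code formula set `Γ_CF` equals the Construction D set `Λ_D`. -/
theorem gammaCF_eq_lambdaD {n a : ℕ} (C : ℕ → Submodule (ZMod 2) (Fin n → ZMod 2))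
    (hmono : ∀ i < a, C i ≤ C (i + 1)) (htop : C a = ⊤)
    (hschur : ∀ i < a, ∀ c ∈ C i, ∀ d ∈ C i, c * d ∈ C (i + 1))
    (b : Module.Basis (Fin n) (ZMod 2) (Fin n → ZMod 2)) (hb : SpansChain a C b) :
    GammaCF a C = LambdaD a C b := by
  have hmono' : ∀ t, t+1 < a → C t ≤ C (t+1) := fun t ht => hmono t (by omega)
  have hschur' : ∀ t, t+1 < a → ∀ c ∈ C t, ∀ d ∈ C t, c * d ∈ C (t+1) :=
    fun t ht => hschur t (by omega)
  exact Set.Subset.antisymm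
    (CFAux.gamma_subset_lambda hmono' hschur' hb)
    (CFAux.lambda_subset_gamma hmono' hschur' hb)
end
end

section
/- Let C_0 ⊆ C_1 ⊆ ... ⊆ C_{a-1} ⊆ C_a = (ZMod 2)^n be a family of nested binary linear codes. Then there exists a linear code C over 𝒰_a (a 𝒰_a-submodule of (Fin n → 𝒰_a)) such that Γ_A' = Γ_CF, where Γ_A' := { Φ(c) + 2^a l | c ∈ C, l ∈ ℤ^n } and Γ_CF is the real code formula set of the chain. -/
noncomputable section

set_option synthInstance.maxHeartbeats 400000

/-- The quotient ring `𝒰_a = 𝔽₂[u]/u^a`. -/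
abbrev Ua (a : ℕ) : Type :=
  Polynomial (ZMod 2) ⧸ Ideal.span {(Polynomial.X : Polynomial (ZMod 2)) ^ a}

/-- The image `u` of the variable `X` in `𝒰_a`. -/
noncomputable def uU (a : ℕ) : Ua a := Ideal.Quotient.mk _ Polynomial.X

/-- The canonical representative (of degree `< a`) of an element of `𝒰_a`. -/
noncomputable def uaRep {a : ℕ} (x : Ua a) : Polynomial (ZMod 2) :=
  Function.surjInv
    (Ideal.Quotient.mk_surjective
      (I := Ideal.span {(Polynomial.X : Polynomial (ZMod 2)) ^ a})) x
    %ₘ (Polynomial.X ^ a)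

/-- The coefficient `b_j` of `u^j` in `x = Σ_{j<a} b_j u^j ∈ 𝒰_a`. -/
noncomputable def uaCoeff {a : ℕ} (x : Ua a) (j : ℕ) : ZMod 2 := (uaRep x).coeff j

/-- The map `Φ : 𝒰_a → ℤ` sending `Σ_{j<a} b_j u^j` to `Σ_{j<a} ψ(b_j) 2^j`. -/
noncomputable def PhiU {a : ℕ} (x : Ua a) : ℤ :=
  ∑ j ∈ Finset.range a, ((uaCoeff x j).val : ℤ) * 2 ^ j

/-- `Φ` extended componentwise to a map `(Fin n → 𝒰_a) → (Fin n → ℤ)`. -/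
noncomputable def PhiV {n a : ℕ} (c : Fin n → Ua a) : Fin n → ℤ := fun k => PhiU (c k)

/-- The Construction A' set `Γ_{A'} = Φ(C) + 2^a ℤ^n` of a code `C ⊆ (Fin n → 𝒰_a)`. -/
def GammaA' {n a : ℕ} (C : Set (Fin n → Ua a)) : Set (Fin n → ℤ) :=
  { x | ∃ c ∈ C, ∃ l : Fin n → ℤ, x = PhiV c + (2 ^ a : ℤ) • l }

set_option maxHeartbeats 1600000

-- auxiliary
open Polynomial in
private def mkQ (a : ℕ) : Polynomial (ZMod 2) →+* Ua a :=
  Ideal.Quotient.mk (Ideal.span {(Polynomial.X : Polynomial (ZMod 2)) ^ a})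

open Polynomial

private lemma uaRep_mk {a : ℕ} (p : Polynomial (ZMod 2)) :
    uaRep (mkQ a p) = p %ₘ X ^ a := by
  unfold uaRep
  set q := Function.surjInv
    (Ideal.Quotient.mk_surjective
      (I := Ideal.span {(Polynomial.X : Polynomial (ZMod 2)) ^ a})) (mkQ a p) with hqdef
  have hq : mkQ a q = mkQ a p := Function.surjInv_eq _ _
  have hdvd : (X : Polynomial (ZMod 2)) ^ a ∣ (q - p) := by
    rw [← Ideal.mem_span_singleton]
    exact Ideal.Quotient.eq.mp hq
  have h0 : (q - p) %ₘ X ^ a = 0 :=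
    (modByMonic_eq_zero_iff_dvd (monic_X_pow a)).mpr hdvd
  calc q %ₘ X ^ a = ((q - p) + p) %ₘ X ^ a := by ring_nf
    _ = (q - p) %ₘ X ^ a + p %ₘ X ^ a := add_modByMonic _ _
    _ = p %ₘ X ^ a := by rw [h0, zero_add]

private lemma mk_uaRep {a : ℕ} (x : Ua a) : mkQ a (uaRep x) = x := by
  obtain ⟨p, rfl⟩ := Ideal.Quotient.mk_surjective (I := Ideal.span {(Polynomial.X : Polynomial (ZMod 2)) ^ a}) x
  show mkQ a (uaRep (mkQ a p)) = mkQ a p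
  rw [uaRep_mk, modByMonic_eq_sub_mul_div _ (X ^ a), map_sub, map_mul]
  have : mkQ a (X ^ a) = 0 := by
    rw [mkQ, Ideal.Quotient.eq_zero_iff_mem]
    exact Ideal.mem_span_singleton_self _
  rw [this, zero_mul, sub_zero]

private lemma degree_uaRep_lt {a : ℕ} (x : Ua a) :
    (uaRep x).degree < (a : WithBot ℕ) := by
  have := degree_modByMonic_lt
    (Function.surjInv
      (Ideal.Quotient.mk_surjective
        (I := Ideal.span {(Polynomial.X : Polynomial (ZMod 2)) ^ a})) x)
    (monic_X_pow (R := ZMod 2) a)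
  rwa [degree_X_pow] at this

private lemma eq_sum_of_degree_lt {a : ℕ} {p : Polynomial (ZMod 2)}
    (h : p.degree < (a : WithBot ℕ)) :
    p = ∑ j ∈ Finset.range a, Polynomial.C (p.coeff j) * X ^ j := by
  ext k
  rw [finset_sum_coeff]
  simp only [coeff_C_mul, coeff_X_pow]
  by_cases hk : k < a
  · rw [Finset.sum_eq_single k]
    · simp
    · intro b _ hb; simp [Ne.symm hb]
    · intro hk'; exact absurd (Finset.mem_range.mpr hk) hk'
  · push_neg at hk
    have : p.coeff k = 0 := coeff_eq_zero_of_degree_lt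
      (lt_of_lt_of_le h (by exact_mod_cast hk))
    rw [this]
    apply (Finset.sum_eq_zero _).symm
    intro j hj
    have : k ≠ j := by
      have := Finset.mem_range.mp hj; omega
    simp [this]

private lemma algebraMap_eq_mk_C {a : ℕ} (b : ZMod 2) :
    algebraMap (ZMod 2) (Ua a) b = mkQ a (Polynomial.C b) := by
  rw [IsScalarTower.algebraMap_apply (ZMod 2) (Polynomial (ZMod 2)) (Ua a)]
  rfl

private lemma mk_sum_eq {a : ℕ} (b : ℕ → ZMod 2) :
    mkQ a (∑ i ∈ Finset.range a, Polynomial.C (b i) * X ^ i)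
      = ∑ i ∈ Finset.range a, algebraMap (ZMod 2) (Ua a) (b i) * (uU a) ^ i := by
  rw [map_sum]
  refine Finset.sum_congr rfl fun i _ => ?_
  rw [map_mul, map_pow, algebraMap_eq_mk_C]
  rfl

private lemma degree_sum_lt {a : ℕ} (b : ℕ → ZMod 2) :
    (∑ i ∈ Finset.range a, Polynomial.C (b i) * X ^ i).degree < (a : WithBot ℕ) := by
  apply lt_of_le_of_lt (degree_sum_le _ _)
  rw [Finset.sup_lt_iff (by exact WithBot.bot_lt_coe a)]
  intro i hi
  apply lt_of_le_of_lt (degree_C_mul_X_pow_le _ _)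
  exact_mod_cast Finset.mem_range.mp hi

private lemma uaCoeff_sum {a : ℕ} (b : ℕ → ZMod 2) {j : ℕ} (hj : j < a) :
    uaCoeff (∑ i ∈ Finset.range a, algebraMap (ZMod 2) (Ua a) (b i) * (uU a) ^ i) j = b j := by
  rw [← mk_sum_eq]
  unfold uaCoeff
  rw [uaRep_mk, (modByMonic_eq_self_iff (monic_X_pow a)).mpr
    (by rw [degree_X_pow]; exact degree_sum_lt b)]
  rw [finset_sum_coeff]
  simp only [coeff_C_mul, coeff_X_pow]
  rw [Finset.sum_eq_single j]
  · simp
  · intro i _ hi; simp [Ne.symm hi]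
  · intro h; exact absurd (Finset.mem_range.mpr hj) h

private lemma ua_decomp {a : ℕ} (r : Ua a) :
    r = ∑ j ∈ Finset.range a, algebraMap (ZMod 2) (Ua a) (uaCoeff r j) * (uU a) ^ j := by
  conv_lhs => rw [← mk_uaRep r]
  rw [← mk_sum_eq]
  congr 1
  exact eq_sum_of_degree_lt (degree_uaRep_lt r)

private lemma PhiU_sum {a : ℕ} (b : ℕ → ZMod 2) :
    PhiU (∑ i ∈ Finset.range a, algebraMap (ZMod 2) (Ua a) (b i) * (uU a) ^ i)
      = ∑ i ∈ Finset.range a, ((b i).val : ℤ) * 2 ^ i := by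
  unfold PhiU
  exact Finset.sum_congr rfl fun j hj => by
    rw [uaCoeff_sum b (Finset.mem_range.mp hj)]

private lemma uU_pow_a {a : ℕ} : (uU a) ^ a = 0 := by
  show mkQ a X ^ a = 0
  rw [← map_pow, mkQ, Ideal.Quotient.eq_zero_iff_mem]
  exact Ideal.mem_span_singleton_self _
open Polynomial


section Main

variable {n a : ℕ}

/-- `u^i` times the embedding of a binary vector. -/
private def shiftV {n : ℕ} (a i : ℕ) (c : Fin n → ZMod 2) : Fin n → Ua a :=
  fun k => (uU a) ^ i * algebraMap (ZMod 2) (Ua a) (c k)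

/-- Coordinatewise multiplication by a scalar, avoiding `•` instance issues. -/
private def mulV {n a : ℕ} (r : Ua a) (x : Fin n → Ua a) : Fin n → Ua a :=
  fun k => r * x k

private def Tset (n a : ℕ) (C : ℕ → Submodule (ZMod 2) (Fin n → ZMod 2)) :
    Set (Fin n → Ua a) :=
  { x | ∃ c : ℕ → Fin n → ZMod 2, (∀ i < a, c i ∈ C i) ∧
      x = ∑ i ∈ Finset.range a, shiftV a i (c i) }

private lemma PhiV_sum (c : ℕ → Fin n → ZMod 2) :
    PhiV (∑ i ∈ Finset.range a, shiftV a i (c i))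
      = ∑ i ∈ Finset.range a, (2 ^ i : ℤ) • psi (c i) := by
  funext k
  have h1 : (∑ i ∈ Finset.range a, shiftV a i (c i)) k
      = ∑ i ∈ Finset.range a, algebraMap (ZMod 2) (Ua a) (c i k) * (uU a) ^ i := by
    rw [Finset.sum_apply]
    exact Finset.sum_congr rfl fun i _ => mul_comm _ _
  show PhiU ((∑ i ∈ Finset.range a, shiftV a i (c i)) k) = _
  rw [h1, PhiU_sum, Finset.sum_apply]
  exact Finset.sum_congr rfl fun i _ => by simp [psi, mul_comm]

variable {C : ℕ → Submodule (ZMod 2) (Fin n → ZMod 2)}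

private lemma Tset_zero : (0 : Fin n → Ua a) ∈ Tset n a C := by
  refine ⟨0, fun i _ => (C i).zero_mem, ?_⟩
  have : ∀ i, shiftV (n := n) a i (0 : Fin n → ZMod 2) = 0 := by
    intro i; funext k; simp [shiftV]
  exact (Finset.sum_eq_zero fun i _ => this i).symm

private lemma Tset_add {x y : Fin n → Ua a} (hx : x ∈ Tset n a C) (hy : y ∈ Tset n a C) :
    x + y ∈ Tset n a C := by
  obtain ⟨c, hc, rfl⟩ := hx
  obtain ⟨d, hd, rfl⟩ := hy
  refine ⟨c + d, fun i hi => (C i).add_mem (hc i hi) (hd i hi), ?_⟩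
  rw [← Finset.sum_add_distrib]
  refine Finset.sum_congr rfl fun i _ => ?_
  funext k
  show shiftV a i (c i) k + shiftV a i (d i) k = shiftV a i ((c + d) i) k
  simp [shiftV, Pi.add_apply, map_add, mul_add]

private lemma mulV_sum (r : Ua a) {s : Finset ℕ} (f : ℕ → Fin n → Ua a) :
    mulV r (∑ i ∈ s, f i) = ∑ i ∈ s, mulV r (f i) := by
  funext k
  simp [mulV, Finset.sum_apply, Finset.mul_sum]

private lemma Tset_mul_u (hmono : ∀ i < a, C i ≤ C (i + 1))
    {x : Fin n → Ua a} (hx : x ∈ Tset n a C) : mulV (uU a) x ∈ Tset n a C := by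
  obtain ⟨c, hc, rfl⟩ := hx
  have hshift : ∀ i (v : Fin n → ZMod 2),
      mulV (uU a) (shiftV a i v) = shiftV a (i + 1) v := by
    intro i v; funext k
    show uU a * ((uU a) ^ i * _) = (uU a) ^ (i + 1) * _
    rw [← mul_assoc, ← pow_succ']
  cases a with
  | zero =>
    rw [Finset.range_zero, Finset.sum_empty]
    have : mulV (uU 0) (0 : Fin n → Ua 0) = 0 := by
      funext k; simp [mulV]
    rw [this]; exact Tset_zero
  | succ m =>
    refine ⟨fun i => match i with | 0 => 0 | j + 1 => c j, fun i hi => ?_, ?_⟩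
    · match i with
      | 0 => exact (C 0).zero_mem
      | j + 1 => exact hmono j (by omega) (hc j (by omega))
    · rw [mulV_sum, Finset.sum_range_succ, Finset.sum_range_succ']
      have hlast : mulV (uU (m + 1)) (shiftV (m + 1) m (c m)) = 0 := by
        rw [hshift]
        funext k
        show (uU (m + 1)) ^ (m + 1) * _ = 0
        rw [uU_pow_a, zero_mul]
      rw [hlast, add_zero]
      have h0 : shiftV (n := n) (m + 1) 0 (0 : Fin n → ZMod 2) = 0 := by
        funext k; simp [shiftV]
      rw [h0, add_zero]
      exact Finset.sum_congr rfl fun i _ => hshift i (c i)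

private lemma Tset_mul_upow (hmono : ∀ i < a, C i ≤ C (i + 1)) (j : ℕ)
    {x : Fin n → Ua a} (hx : x ∈ Tset n a C) : mulV ((uU a) ^ j) x ∈ Tset n a C := by
  induction j with
  | zero =>
    have : mulV ((uU a) ^ 0) x = x := by
      funext k; simp [mulV]
    rwa [this]
  | succ m ih =>
    have : mulV ((uU a) ^ (m + 1)) x = mulV (uU a) (mulV ((uU a) ^ m) x) := by
      funext k; show (uU a) ^ (m + 1) * x k = uU a * ((uU a) ^ m * x k)
      rw [← mul_assoc, ← pow_succ']
    rw [this]
    exact Tset_mul_u hmono ih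

private lemma Tset_mul_zmod (b : ZMod 2) {x : Fin n → Ua a} (hx : x ∈ Tset n a C) :
    mulV (algebraMap (ZMod 2) (Ua a) b) x ∈ Tset n a C := by
  have : b = 0 ∨ b = 1 := by revert b; decide
  rcases this with rfl | rfl
  · have : mulV (algebraMap (ZMod 2) (Ua a) 0) x = 0 := by
      funext k; simp [mulV]
    rw [this]; exact Tset_zero
  · have : mulV (algebraMap (ZMod 2) (Ua a) 1) x = x := by
      funext k; simp [mulV]
    rwa [this]

private lemma Tset_sum {s : Finset ℕ} {f : ℕ → Fin n → Ua a}
    (h : ∀ j ∈ s, f j ∈ Tset n a C) : (∑ j ∈ s, f j) ∈ Tset n a C := by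
  induction s using Finset.induction_on with
  | empty => rw [Finset.sum_empty]; exact Tset_zero
  | insert _ _ hns ih =>
    rw [Finset.sum_insert hns]
    exact Tset_add (h _ (Finset.mem_insert_self _ _))
      (ih fun j hj => h j (Finset.mem_insert_of_mem hj))

private lemma Tset_mul (hmono : ∀ i < a, C i ≤ C (i + 1)) (r : Ua a)
    {x : Fin n → Ua a} (hx : x ∈ Tset n a C) : mulV r x ∈ Tset n a C := by
  have hr : mulV r x = ∑ j ∈ Finset.range a,
      mulV (algebraMap (ZMod 2) (Ua a) (uaCoeff r j)) (mulV ((uU a) ^ j) x) := by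
    conv_lhs => rw [ua_decomp r]
    funext k
    rw [Finset.sum_apply]
    show (∑ j ∈ Finset.range a, algebraMap (ZMod 2) (Ua a) (uaCoeff r j) * (uU a) ^ j) * x k = _
    rw [Finset.sum_mul]
    exact Finset.sum_congr rfl fun j _ => by
      show _ = algebraMap (ZMod 2) (Ua a) (uaCoeff r j) * ((uU a) ^ j * x k)
      rw [mul_assoc]
  rw [hr]
  exact Tset_sum fun j _ => Tset_mul_zmod _ (Tset_mul_upow hmono j hx)

/-- For any family of nested binary linear codes there exists a linear
code `C` over `𝒰_a = 𝔽₂[u]/u^a` (a `𝒰_a`-submodule of `(Fin n → 𝒰_a)`) such that the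
Construction A' set `Γ_{A'} = Φ(C) + 2^a ℤ^n` equals the code formula set `Γ_CF`. -/
theorem exists_code_gammaA'_eq_gammaCF {n a : ℕ}
    (C : ℕ → Submodule (ZMod 2) (Fin n → ZMod 2))
    (hmono : ∀ i < a, C i ≤ C (i + 1)) (htop : C a = ⊤) :
    ∃ M : Submodule (Ua a) (Fin n → Ua a),
      GammaA' (M : Set (Fin n → Ua a)) = GammaCF a C := by
  refine ⟨{ carrier := Tset n a C
            add_mem' := fun hx hy => Tset_add hx hy
            zero_mem' := Tset_zero
            smul_mem' := fun r x hx => by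
              have : r • x = mulV r x := rfl
              rw [this]
              exact Tset_mul hmono r hx }, ?_⟩
  ext x
  constructor
  · rintro ⟨m, hm, l, rfl⟩
    obtain ⟨c, hc, rfl⟩ := hm
    exact ⟨c, l, hc, by rw [PhiV_sum]⟩
  · rintro ⟨c, l, hc, rfl⟩
    exact ⟨∑ i ∈ Finset.range a, shiftV a i (c i), ⟨c, hc, rfl⟩, l,
      by rw [PhiV_sum]⟩

end Main
end
end

section
/- Let C_0 ⊆ C_1 ⊆ ... ⊆ C_{a-1} ⊆ C_a = (ZMod 2)^n be a family of nested binary linear codes. Then there exists a linear code C over 𝒰_a (a 𝒰_a-submodule of (Fin n → 𝒰_a)) such that Γ_A' = Γ_CF over the Gaussian integers, where Γ_CF := { Σ_{i=0}^{a-1} (1+i)^i · ψ_ℂ(c_i) + (1+i)^a · l | c_i ∈ C_i, l ∈ (Fin n → ℤ[i]) } ⊆ (Fin n → ℤ[i]) and Γ_A' := { Φ_ℂ(c) + (1+i)^a · l | c ∈ C, l ∈ (Fin n → ℤ[i]) }. -/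
noncomputable section

set_option synthInstance.maxHeartbeats 400000

/-- The natural embedding of `(ZMod 2)^n` into `ℤ[i]^n`, applying coordinatewise the map
sending `0` to `0` and `1` to `1`. -/
def psiC {n : ℕ} (x : Fin n → ZMod 2) : Fin n → GaussianInt :=
  fun k => ((x k).val : GaussianInt)

/-- The complex code formula set
`Γ_CF = ψ(C₀) + (1+i)ψ(C₁) + ... + (1+i)^{a-1}ψ(C_{a-1}) + (1+i)^a ℤ[i]^n`. -/
def GammaCFC {n : ℕ} (a : ℕ) (C : ℕ → Submodule (ZMod 2) (Fin n → ZMod 2)) :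
    Set (Fin n → GaussianInt) :=
  { x | ∃ (c : ℕ → Fin n → ZMod 2) (l : Fin n → GaussianInt),
      (∀ i < a, c i ∈ C i) ∧
      x = (∑ i ∈ Finset.range a,
            ((1 + Zsqrtd.sqrtd : GaussianInt) ^ i) • psiC (c i))
          + ((1 + Zsqrtd.sqrtd : GaussianInt) ^ a) • l }

/-- The map `Φ_ℂ : 𝒰_a → ℤ[i]` sending `Σ_{j<a} b_j u^j` to `Σ_{j<a} ψ(b_j) (1+i)^j`. -/
noncomputable def PhiUC {a : ℕ} (x : Ua a) : GaussianInt :=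
  ∑ j ∈ Finset.range a,
    ((uaCoeff x j).val : GaussianInt) * (1 + Zsqrtd.sqrtd : GaussianInt) ^ j

/-- `Φ_ℂ` extended componentwise to vectors. -/
noncomputable def PhiVC {n a : ℕ} (c : Fin n → Ua a) : Fin n → GaussianInt :=
  fun k => PhiUC (c k)

/-- The complex Construction A' set `Γ_{A'} = Φ_ℂ(C) + (1+i)^a ℤ[i]^n`. -/
def GammaA'C {n a : ℕ} (C : Set (Fin n → Ua a)) : Set (Fin n → GaussianInt) :=
  { x | ∃ c ∈ C, ∃ l : Fin n → GaussianInt,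
      x = PhiVC c + ((1 + Zsqrtd.sqrtd : GaussianInt) ^ a) • l }

open Polynomial in
private lemma mkQ_uaRep {a : ℕ} (x : Ua a) :
    Ideal.Quotient.mk (Ideal.span {(X : Polynomial (ZMod 2)) ^ a}) (uaRep x) = x := by
  have hq : Ideal.Quotient.mk (Ideal.span {(X : Polynomial (ZMod 2)) ^ a})
      (Function.surjInv (Ideal.Quotient.mk_surjective
        (I := Ideal.span {(X : Polynomial (ZMod 2)) ^ a})) x) = x :=
    Function.surjInv_eq _ x
  conv_rhs => rw [← hq]
  rw [uaRep, Ideal.Quotient.eq, Ideal.mem_span_singleton]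
  refine ⟨-(Function.surjInv (Ideal.Quotient.mk_surjective
        (I := Ideal.span {(X : Polynomial (ZMod 2)) ^ a})) x /ₘ X ^ a), ?_⟩
  have h := Polynomial.modByMonic_add_div
    (Function.surjInv (Ideal.Quotient.mk_surjective
      (I := Ideal.span {(X : Polynomial (ZMod 2)) ^ a})) x) (X ^ a)
  rw [mul_neg]
  linear_combination h

open Polynomial in
private lemma uaCoeff_mk {a : ℕ} (p : Polynomial (ZMod 2)) {j : ℕ} (hj : j < a) :
    uaCoeff (Ideal.Quotient.mk (Ideal.span {(X : Polynomial (ZMod 2)) ^ a}) p) j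
      = p.coeff j := by
  obtain ⟨r, hr⟩ := Ideal.mem_span_singleton.mp
    (Ideal.Quotient.eq.mp (mkQ_uaRep (Ideal.Quotient.mk
      (Ideal.span {(X : Polynomial (ZMod 2)) ^ a}) p)))
  have hrep : uaRep (Ideal.Quotient.mk (Ideal.span {(X : Polynomial (ZMod 2)) ^ a}) p)
      = X ^ a * r + p := by linear_combination hr
  rw [uaCoeff, hrep, coeff_add, mul_comm, coeff_mul_X_pow', if_neg (by omega), zero_add]

/-- For any family of nested binary linear codes there exists a linear
code `C` over `𝒰_a` such that, over the Gaussian integers, the Construction A' set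
`Γ_{A'} = Φ_ℂ(C) + (1+i)^a ℤ[i]^n` equals the complex code formula set `Γ_CF`. -/
theorem exists_code_gammaA'_eq_gammaCF_gaussian {n a : ℕ}
    (C : ℕ → Submodule (ZMod 2) (Fin n → ZMod 2))
    (hmono : ∀ i < a, C i ≤ C (i + 1)) (htop : C a = ⊤) :
    ∃ M : Submodule (Ua a) (Fin n → Ua a),
      GammaA'C (M : Set (Fin n → Ua a)) = GammaCFC a C := by
  classical
  -- monotone chain
  have hchain : ∀ j, j < a → ∀ i ≤ j, C i ≤ C j := by
    intro j
    induction j with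
    | zero =>
      intro _ i hi
      obtain rfl : i = 0 := Nat.le_zero.mp hi
      exact le_rfl
    | succ m ih =>
      intro hj i hi
      rcases Nat.lt_or_ge i (m + 1) with h | h
      · exact (ih (by omega) i (by omega)).trans (hmono m (by omega))
      · have : i = m + 1 := by omega
        subst this; exact le_rfl
  -- coefficient lemmas
  have key_add : ∀ {j : ℕ}, j < a → ∀ u v : Ua a,
      uaCoeff (u + v) j = uaCoeff u j + uaCoeff v j := by
    intro j hj u v
    conv_lhs => rw [← mkQ_uaRep u, ← mkQ_uaRep v, ← map_add]
    rw [uaCoeff_mk _ hj, Polynomial.coeff_add]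
    rfl
  have key_mul : ∀ {j : ℕ}, j < a → ∀ r u : Ua a,
      uaCoeff (r * u) j
        = ∑ x ∈ Finset.HasAntidiagonal.antidiagonal j, (uaRep r).coeff x.1 * uaCoeff u x.2 := by
    intro j hj r u
    conv_lhs => rw [← mkQ_uaRep r, ← mkQ_uaRep u, ← map_mul]
    rw [uaCoeff_mk _ hj, Polynomial.coeff_mul]
    rfl
  -- Phi in terms of coefficients
  have hPhi : ∀ m : Fin n → Ua a, PhiVC m
      = ∑ i ∈ Finset.range a,
          ((1 + Zsqrtd.sqrtd : GaussianInt) ^ i) • psiC (fun k => uaCoeff (m k) i) := by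
    intro m; funext k
    rw [PhiVC, PhiUC, Finset.sum_apply]
    refine Finset.sum_congr rfl fun j hj => ?_
    simp [psiC, mul_comm]
  refine ⟨{
    carrier := { m | ∀ j < a, (fun k => uaCoeff (m k) j) ∈ C j }
    zero_mem' := by
      intro j hj
      have h0 : (fun k => uaCoeff ((0 : Fin n → Ua a) k) j) = 0 := by
        funext k
        show uaCoeff (0 : Ua a) j = 0
        rw [← map_zero (Ideal.Quotient.mk
          (Ideal.span {(Polynomial.X : Polynomial (ZMod 2)) ^ a})), uaCoeff_mk _ hj,
          Polynomial.coeff_zero]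
      rw [h0]; exact zero_mem _
    add_mem' := by
      intro x y hx hy j hj
      have h1 : (fun k => uaCoeff ((x + y) k) j)
          = (fun k => uaCoeff (x k) j) + (fun k => uaCoeff (y k) j) := by
        funext k
        exact key_add hj (x k) (y k)
      rw [h1]
      exact add_mem (hx j hj) (hy j hj)
    smul_mem' := by
      intro r m hm j hj
      have h1 : (fun k => uaCoeff ((r • m) k) j)
          = ∑ x ∈ Finset.HasAntidiagonal.antidiagonal j,
              (uaRep r).coeff x.1 • (fun k => uaCoeff (m k) x.2) := by
        funext k
        rw [Finset.sum_apply]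
        exact key_mul hj r (m k)
      rw [h1]
      refine Submodule.sum_mem _ fun x hx => ?_
      have hx2 : x.2 ≤ j := by
        have := Finset.HasAntidiagonal.mem_antidiagonal.mp hx; omega
      exact Submodule.smul_mem _ _
        (hchain j hj x.2 hx2 (hm x.2 (lt_of_le_of_lt hx2 hj)))
    }, ?_⟩
  ext x
  constructor
  · rintro ⟨c, hc, l, rfl⟩
    refine ⟨fun j => fun k => uaCoeff (c k) j, l, fun i hi => hc i hi, ?_⟩
    rw [hPhi]
  · rintro ⟨c, l, hc, rfl⟩
    set m : Fin n → Ua a := fun k =>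
      Ideal.Quotient.mk (Ideal.span {(Polynomial.X : Polynomial (ZMod 2)) ^ a})
        (∑ j ∈ Finset.range a, Polynomial.monomial j (c j k)) with hm
    have hcoeff : ∀ j < a, (fun k => uaCoeff (m k) j) = c j := by
      intro j hj
      funext k
      rw [hm]
      simp only
      rw [uaCoeff_mk _ hj, Polynomial.finset_sum_coeff]
      simp only [Polynomial.coeff_monomial]
      rw [Finset.sum_ite_eq' (Finset.range a) j (fun j' => c j' k),
        if_pos (Finset.mem_range.mpr hj)]
    refine ⟨m, ?_, l, ?_⟩
    · intro j hj
      rw [hcoeff j hj]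
      exact hc j hj
    · rw [hPhi]
      congr 1
      refine Finset.sum_congr rfl fun j hj => ?_
      rw [hcoeff j (Finset.mem_range.mp hj)]
end
end

section
/- Let C_0 ⊆ C_1 ⊆ ... ⊆ C_{a-1} ⊆ (ZMod 2)^n be nested binary linear codes that are closed under Schur product (with C_a := (ZMod 2)^n), and let C := { Σ_{i=0}^{a-1} c_i u^i | c_i ∈ C_i } ⊆ (Fin n → 𝒰_a) be the associated code over 𝒰_a. Then C is closed under shifted Schur product: for all c_1, c_2 ∈ C, (c_1 ∗ c_2)·u ∈ C. -/
noncomputable section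

/-- The Schur (Hadamard) product on `𝒰_a`:
`(Σ_j x_j u^j) ∗ (Σ_j y_j u^j) = Σ_j (x_j y_j) u^j`. -/
noncomputable def schurU {a : ℕ} (x y : Ua a) : Ua a :=
  Ideal.Quotient.mk _
    (∑ j ∈ Finset.range a, Polynomial.C (uaCoeff x j * uaCoeff y j) * Polynomial.X ^ j)

/-- The code `C = C₀ + u C₁ + ... + u^{a-1} C_{a-1}` over `𝒰_a` associated to a chain
of binary codes: all vectors `Σ_{i<a} c_i u^i` with `c_i ∈ C_i`. -/
noncomputable def CodeSet {n : ℕ} (a : ℕ) (C : ℕ → Submodule (ZMod 2) (Fin n → ZMod 2)) :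
    Set (Fin n → Ua a) :=
  { x | ∃ c : ℕ → Fin n → ZMod 2,
      (∀ i < a, c i ∈ C i) ∧
      x = fun k => Ideal.Quotient.mk _
        (∑ i ∈ Finset.range a, Polynomial.C (c i k) * Polynomial.X ^ i) }

open Polynomial

lemma coeff_sumC (a : ℕ) (b : ℕ → ZMod 2) (j : ℕ) :
    (∑ i ∈ Finset.range a, C (b i) * X ^ i).coeff j = if j < a then b j else 0 := by
  rw [Polynomial.finset_sum_coeff]
  simp only [Polynomial.coeff_C_mul, Polynomial.coeff_X_pow]
  simp [Finset.sum_ite_eq, Finset.mem_range, eq_comm]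

lemma degree_sumC_lt (a : ℕ) (b : ℕ → ZMod 2) :
    (∑ i ∈ Finset.range a, C (b i) * X ^ i).degree < (a : WithBot ℕ) := by
  rw [Polynomial.degree_lt_iff_coeff_zero]
  intro m hm
  rw [coeff_sumC]
  have : ¬ m < a := by exact_mod_cast not_lt.mpr hm
  simp [this]

lemma uaCoeff_mk_s17 (a : ℕ) (b : ℕ → ZMod 2) (j : ℕ) :
    uaCoeff (Ideal.Quotient.mk _ (∑ i ∈ Finset.range a, C (b i) * X ^ i) : Ua a) j
      = if j < a then b j else 0 := by
  set q : Polynomial (ZMod 2) := ∑ i ∈ Finset.range a, C (b i) * X ^ i with hq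
  set p : Polynomial (ZMod 2) :=
    Function.surjInv
      (Ideal.Quotient.mk_surjective
        (I := Ideal.span {(Polynomial.X : Polynomial (ZMod 2)) ^ a}))
      (Ideal.Quotient.mk _ q) with hpdef
  have hp : Ideal.Quotient.mk (Ideal.span {(X : Polynomial (ZMod 2)) ^ a}) p
      = Ideal.Quotient.mk _ q := Function.surjInv_eq _ _
  have hdvd : (X : Polynomial (ZMod 2)) ^ a ∣ p - q := by
    rw [Ideal.Quotient.eq] at hp
    exact Ideal.mem_span_singleton.mp hp
  obtain ⟨r, hr⟩ := hdvd
  have hp' : p = q + X ^ a * r := by linear_combination hr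
  have hmod : p %ₘ X ^ a = q := by
    rw [hp', Polynomial.add_modByMonic,
      (Polynomial.modByMonic_eq_zero_iff_dvd (monic_X_pow a)).mpr ⟨r, rfl⟩, add_zero,
      (Polynomial.modByMonic_eq_self_iff (monic_X_pow a)).mpr]
    rw [Polynomial.degree_X_pow]
    exact degree_sumC_lt a b
  have : uaCoeff (Ideal.Quotient.mk _ q : Ua a) j = (p %ₘ X ^ a).coeff j := rfl
  rw [this, hmod, coeff_sumC]

/-- If the nested binary codes `C₀ ⊆ ... ⊆ C_{a-1}` are closed under
Schur product (with `C_a = (ZMod 2)^n`), then the associated code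
`C = C₀ + u C₁ + ... + u^{a-1} C_{a-1}` over `𝒰_a` is closed under shifted Schur
product: `(c₁ ∗ c₂)·u ∈ C` for all `c₁, c₂ ∈ C`. -/
theorem codeSet_shifted_schur {n a : ℕ}
    (C : ℕ → Submodule (ZMod 2) (Fin n → ZMod 2))
    (hmono : ∀ i < a, C i ≤ C (i + 1)) (htop : C a = ⊤)
    (hschur : ∀ i < a, ∀ c ∈ C i, ∀ d ∈ C i, c * d ∈ C (i + 1)) :
    ∀ c₁ ∈ CodeSet a C, ∀ c₂ ∈ CodeSet a C,
      (fun k => schurU (c₁ k) (c₂ k) * uU a) ∈ CodeSet a C := by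
  rintro c₁ ⟨c, hc, rfl⟩ c₂ ⟨d, hd, rfl⟩
  rcases Nat.eq_zero_or_pos a with ha | ha
  · subst ha
    refine ⟨0, by simp, ?_⟩
    have hsub : Subsingleton (Ua 0) := by
      rw [Ideal.Quotient.subsingleton_iff]
      simp [Ideal.span_singleton_eq_top]
    funext k
    exact Subsingleton.elim _ _
  · obtain ⟨m, rfl⟩ : ∃ m, a = m + 1 := ⟨a - 1, (Nat.succ_pred_eq_of_pos ha).symm⟩
    refine ⟨fun i => if i = 0 then 0 else c (i - 1) * d (i - 1), ?_, ?_⟩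
    · intro i hi
      rcases i with _ | j
      · simpa using (C 0).zero_mem
      · simpa using hschur j (by omega) (c j) (hc j (by omega)) (d j) (hd j (by omega))
    · funext k
      show schurU _ _ * uU (m + 1) = _
      unfold schurU uU
      rw [← map_mul, Ideal.Quotient.eq, Ideal.mem_span_singleton]
      have hco : ∀ j ∈ Finset.range (m + 1),
          Polynomial.C (uaCoeff (Ideal.Quotient.mk _
              (∑ i ∈ Finset.range (m + 1), Polynomial.C (c i k) * X ^ i) : Ua (m + 1)) j *
            uaCoeff (Ideal.Quotient.mk _
              (∑ i ∈ Finset.range (m + 1), Polynomial.C (d i k) * X ^ i) : Ua (m + 1)) j) * X ^ j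
          = Polynomial.C (c j k * d j k) * X ^ j := by
        intro j hj
        rw [Finset.mem_range] at hj
        rw [uaCoeff_mk_s17, uaCoeff_mk_s17, if_pos hj, if_pos hj]
      rw [Finset.sum_congr rfl hco]
      refine ⟨Polynomial.C (c m k * d m k), ?_⟩
      rw [Finset.sum_range_succ' (fun i =>
        Polynomial.C ((if i = 0 then (0 : Fin n → ZMod 2) else c (i - 1) * d (i - 1)) k) * X ^ i)]
      simp only [Nat.succ_ne_zero, if_false, if_true, Pi.mul_apply, Pi.zero_apply, map_zero,
        zero_mul, add_zero, Nat.add_sub_cancel, reduceIte]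
      rw [Finset.sum_range_succ, add_mul, Finset.sum_mul,
        Finset.sum_congr rfl (fun j _ => by ring : ∀ j ∈ Finset.range m,
          Polynomial.C (c j k * d j k) * X ^ j * X = Polynomial.C (c j k * d j k) * X ^ (j + 1))]
      ring
end
end
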